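/- arXiv:2210.03001 — 4 statements merged into one kernel-verified Lean document; each statement's English description precedes it below -/
import Mathlib

section
/- Let Ω ⊂ ℂⁿ, n ≥ 2, be a bounded domain, q ∈ ∂Ω, and suppose there exists a neighbourhood 𝒪 of q such that 𝒪 ∩ Ω is log-type convex. Then there exist a neighbourhood W of q with W compactly contained in 𝒪 and constants c, ν > 0 such that k_Ω(w;v) ≥ c ‖v‖ (log(1/δ_Ω(w)))^{1+ν} for all w ∈ W ∩ Ω and all v ∈ ℂⁿ. -/
/-
Common definitions for formalizing results from
"Local continuous extension of proper holomorphic maps: low-regularity and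
infinite-type boundaries" (A. Banik).
-/

open Metric Set Filter MeasureTheory
open scoped Real ENNReal ComplexInnerProductSpace Topology

noncomputable section

namespace Paper

/-- `ℂⁿ` with the Euclidean (Hermitian) norm. -/
abbrev Cn (n : ℕ) := EuclideanSpace ℂ (Fin n)

variable {E : Type*} [NormedAddCommGroup E] [InnerProductSpace ℂ E]

/-- `δ_D(z)`: the Euclidean distance from `z` to the complement of `D`. -/
def delta (D : Set E) (z : E) : ℝ := Metric.infDist z Dᶜ

/-- The Kobayashi pseudometric `k_D(z; v)` of `D`. -/
def kobMetric (D : Set E) (z v : E) : ℝ :=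
  sInf {r : ℝ | ∃ α : ℂ, r = ‖α‖ ∧ ∃ f : ℂ → E,
    DifferentiableOn ℂ f (ball (0 : ℂ) 1) ∧ MapsTo f (ball (0 : ℂ) 1) D ∧
    f 0 = z ∧ α • deriv f 0 = v}

/-- The Poincaré distance on the unit disc between `0` and `σ ∈ [0,1)`,
`ρ(0,σ) = (1/2) log((1+σ)/(1-σ))`. -/
def poincare (σ : ℝ) : ℝ := (1 / 2) * Real.log ((1 + σ) / (1 - σ))

/-- The Lempert function of `D`. -/
def lempert (D : Set E) (z w : E) : ℝ :=
  sInf {r : ℝ | ∃ σ : ℝ, 0 ≤ σ ∧ σ < 1 ∧ r = poincare σ ∧ ∃ f : ℂ → E,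
    DifferentiableOn ℂ f (ball (0 : ℂ) 1) ∧ MapsTo f (ball (0 : ℂ) 1) D ∧
    f 0 = z ∧ f (σ : ℂ) = w}

/-- The Kobayashi pseudodistance `K_D`, defined via chains of analytic discs. -/
def kobDist (D : Set E) (z w : E) : ℝ :=
  sInf {r : ℝ | ∃ m : ℕ, ∃ c : ℕ → E, c 0 = z ∧ c m = w ∧ (∀ i, i ≤ m → c i ∈ D) ∧
    r = ∑ i ∈ Finset.range m, lempert D (c i) (c (i + 1))}

/-- A real-valued function is plurisubharmonic on `D` if it is upper semicontinuous on `D`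
and satisfies the sub-mean-value inequality on every circle, in every complex line,
whose corresponding closed disc lies in `D`. -/
def PlurisubharmonicOn (u : E → ℝ) (D : Set E) : Prop :=
  UpperSemicontinuousOn u D ∧
  ∀ z ∈ D, ∀ v : E, ∀ r : ℝ, 0 < r →
    (∀ ζ : ℂ, ‖ζ‖ ≤ r → z + ζ • v ∈ D) →
    u z ≤ (2 * π)⁻¹ *
      ∫ θ in (0 : ℝ)..(2 * π), u (z + ((r : ℂ) * Complex.exp ((θ : ℂ) * Complex.I)) • v)

/-- The open right circular cone `Γ(v, θ)` with aperture `θ`, for a unit vector `v`. -/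
def cone (v : E) (θ : ℝ) : Set E := {z | Real.cos (θ / 2) * ‖z‖ < ⟪z, v⟫.re}

/-- `D` satisfies a uniform interior cone condition in `W`. -/
def UnifIntCone (D W : Set E) : Prop :=
  ∀ 𝒰 : Set E, IsOpen 𝒰 → 𝒰 ⊆ D → IsCompact (closure 𝒰) → closure 𝒰 ⊆ W →
    ∃ r : ℝ, 0 < r ∧ ∃ θ : ℝ, 0 < θ ∧ θ < π ∧
      ∀ w ∈ 𝒰, ∃ ξ ∈ frontier D ∩ W, ∃ v : E, ‖v‖ = 1 ∧
        (∃ t : ℝ, 0 < t ∧ w = ξ + t • v) ∧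
        w ∈ ((ξ + ·) '' cone v θ) ∩ ball ξ r ∧
        ((ξ + ·) '' cone v θ) ∩ ball ξ r ⊆ W ∩ D

/-- `ω : [0,∞) → [0,∞)`, `ω(0) = 0`, satisfies a Dini condition. -/
def DiniFunction (ω : ℝ → ℝ) : Prop :=
  ω 0 = 0 ∧ (∀ r : ℝ, 0 ≤ r → 0 ≤ ω r) ∧ MonotoneOn ω (Ici 0) ∧
  ∃ ε : ℝ, 0 < ε ∧ IntegrableOn (fun r => ω r / r) (Ioo 0 ε)

/-- The cluster set `C(F, p)` of `F : D → ℂⁿ` at `p`. -/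
def clusterSet (F : E → E) (D : Set E) (p : E) : Set E :=
  {w | ∃ z : ℕ → E, (∀ k, z k ∈ D) ∧ Tendsto z atTop (𝓝 p) ∧ Tendsto (F ∘ z) atTop (𝓝 w)}

/-- `F : D → Ω` is a proper map. -/
def ProperOn (F : E → E) (D Ω : Set E) : Prop :=
  ∀ K : Set E, K ⊆ Ω → IsCompact K → IsCompact (F ⁻¹' K ∩ D)

/-- `δ_Ω(z; v)`: the radius of the largest disc, centred at `z` in the direction `v`,
contained in `Ω`. -/
def dirDist (Ω : Set E) (z v : E) : ℝ :=
  sSup {r : ℝ | 0 < r ∧ ∀ ζ : ℂ, ‖ζ‖ < r → z + ζ • (‖v‖⁻¹ • v) ∈ Ω}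

/-- A bounded convex domain is log-type convex (Liu–Wang). -/
def LogTypeConvex (M : Set E) : Prop :=
  Bornology.IsBounded M ∧ Convex ℝ M ∧ M.Nonempty ∧
  ∃ C : ℝ, 0 < C ∧ ∃ ν : ℝ, 0 < ν ∧ ∀ z ∈ M, ∀ v : E, v ≠ 0 →
    dirDist M z v ≤ C / |Real.log (delta M z)| ^ (1 + ν)

/-- `η` is the unit inward normal to `∂D` at `ξ`, characterized metrically:
`δ_D(ξ + tη)/t → 1` as `t → 0⁺`. -/
def IsInwardNormalAt (D : Set E) (ξ η : E) : Prop :=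
  ‖η‖ = 1 ∧ Tendsto (fun t : ℝ => delta D (ξ + t • η) / t) (𝓝[>] 0) (𝓝 1)

/-- The first `n` coordinates `Z′` of `Z ∈ ℂ^{n+1}`. -/
def sliceCoord {n : ℕ} (Z : Cn (n + 1)) : Cn n := WithLp.toLp 2 (fun i : Fin n => Z i.castSucc)

/-- The last coordinate `Z_n` of `Z ∈ ℂ^{n+1}`. -/
def lastCoord {n : ℕ} (Z : Cn (n + 1)) : ℂ := Z (Fin.last n)

/-- The parameter box `B^{n-1}(0, r) × (-r, r)` on which the graphing functions live. -/
def box (n : ℕ) (r : ℝ) : Set (Cn n × ℝ) := ball (0 : Cn n) r ×ˢ Ioo (-r) r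

/-- The Euclidean norm on `ℂⁿ × ℝ`. -/
def pnorm {n : ℕ} (x : Cn n × ℝ) : ℝ := Real.sqrt (‖x.1‖ ^ 2 + x.2 ^ 2)

/-- `{(Z', Z_n) : Im Z_n > φ(Z', Re Z_n), ‖Z'‖ < r, |Re Z_n| < r}`. -/
def graphDom {n : ℕ} (φ : Cn n × ℝ → ℝ) (r : ℝ) : Set (Cn (n + 1)) :=
  {Z | φ (sliceCoord Z, (lastCoord Z).re) < (lastCoord Z).im ∧
       ‖sliceCoord Z‖ < r ∧ |(lastCoord Z).re| < r}

/-- `{(Z', Z_n) : Im Z_n = φ(Z', Re Z_n), ‖Z'‖ < r, |Re Z_n| < r}`. -/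
def graphBd {n : ℕ} (φ : Cn n × ℝ → ℝ) (r : ℝ) : Set (Cn (n + 1)) :=
  {Z | (lastCoord Z).im = φ (sliceCoord Z, (lastCoord Z).re) ∧
       ‖sliceCoord Z‖ < r ∧ |(lastCoord Z).re| < r}

/-- The graphing data `(N_ξ, U^ξ, r_ξ, φ_ξ)` at a boundary point `ξ`:
`U^ξ(z) = U_ξ(z - ξ)` with `U_ξ` unitary, and the local graph description of `D` and `∂D`. -/
def IsGraphChartAt {n : ℕ} (D : Set (Cn (n + 1))) (ξ : Cn (n + 1)) (N : Set (Cn (n + 1)))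
    (Uu : Cn (n + 1) ≃ₗᵢ[ℂ] Cn (n + 1)) (r : ℝ) (φ : Cn n × ℝ → ℝ) : Prop :=
  IsOpen N ∧ ξ ∈ N ∧ 0 < r ∧
  (fun z => Uu (z - ξ)) '' (N ∩ D) ⊆ graphDom φ r ∧
  (fun z => Uu (z - ξ)) '' (N ∩ frontier D) = graphBd φ r

/-- `φ` is Lipschitz on the box `B^{n-1}(0, r) × (-r, r)`. -/
def LipOnBox {n : ℕ} (φ : Cn n × ℝ → ℝ) (r : ℝ) : Prop :=
  ∃ K : ℝ, ∀ x ∈ box n r, ∀ y ∈ box n r, |φ x - φ y| ≤ K * pnorm (x - y)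

/-- `φ` is `C¹` on the box with modulus of continuity `ω` for its gradient. -/
def C1ModOnBox {n : ℕ} (φ : Cn n × ℝ → ℝ) (r : ℝ) (ω : ℝ → ℝ) : Prop :=
  (∀ x ∈ box n r, DifferentiableAt ℝ φ x) ∧
  ∀ x ∈ box n r, ∀ y ∈ box n r, ‖fderiv ℝ φ x - fderiv ℝ φ y‖ ≤ ω (pnorm (x - y))

/-- `∂D ∩ U` is a Lipschitz submanifold of `U`. -/
def IsLipschitzSubmanifold {n : ℕ} (D U : Set (Cn (n + 1))) : Prop :=
  ∀ ξ ∈ frontier D ∩ U, ∃ N Uu r φ,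
    N ⊆ U ∧ IsGraphChartAt D ξ N Uu r φ ∧ LipOnBox φ r

/-- `∂D ∩ U` is a `C^{1,Dini}` submanifold of `U`. -/
def IsC1DiniSubmanifold {n : ℕ} (D U : Set (Cn (n + 1))) : Prop :=
  ∃ ω : ℝ → ℝ, DiniFunction ω ∧
    ∀ ξ ∈ frontier D ∩ U, ∃ N Uu r φ,
      N ⊆ U ∧ IsGraphChartAt D ξ N Uu r φ ∧ C1ModOnBox φ r ω

/-- `∂D ∩ U` is a `C¹` submanifold of `U`. -/
def IsC1Submanifold {n : ℕ} (D U : Set (Cn (n + 1))) : Prop :=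
  ∀ ξ ∈ frontier D ∩ U, ∃ N Uu r φ,
    N ⊆ U ∧ IsGraphChartAt D ξ N Uu r φ ∧ ContDiffOn ℝ 1 φ (box n r)

/-- `∂D ∩ U` is a `C²` submanifold of `U`. -/
def IsC2Submanifold {n : ℕ} (D U : Set (Cn (n + 1))) : Prop :=
  ∀ ξ ∈ frontier D ∩ U, ∃ N Uu r φ,
    N ⊆ U ∧ IsGraphChartAt D ξ N Uu r φ ∧ ContDiffOn ℝ 2 φ (box n r)

/-- A `(1, κ)`-almost-geodesic for the Kobayashi distance of `M`. -/
def IsAlmostGeodesic (M : Set E) (κ a b : ℝ) (γ : ℝ → E) : Prop :=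
  a ≤ b ∧ ContinuousOn γ (Icc a b) ∧ MapsTo γ (Icc a b) M ∧
  ∀ s ∈ Icc a b, ∀ t ∈ Icc a b,
    |s - t| - κ ≤ kobDist M (γ s) (γ t) ∧ kobDist M (γ s) (γ t) ≤ |s - t| + κ

/-- The visibility property (Bracci–Nikolov–Thomas). -/
def VisibilityProperty (M : Set E) : Prop :=
  ∃ κ : ℝ, 0 < κ ∧ ∀ ξ ∈ frontier M, ∀ η ∈ frontier M, ξ ≠ η →
    ∀ Vξ Vη : Set E, IsOpen Vξ → IsOpen Vη → ξ ∈ Vξ → η ∈ Vη →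
      Disjoint (closure Vξ) (closure Vη) →
      ∃ K : Set E, IsCompact K ∧ K ⊆ M ∧
        ∀ a b : ℝ, ∀ γ : ℝ → E, IsAlmostGeodesic M κ a b γ →
          γ a ∈ Vξ ∩ M → γ b ∈ Vη ∩ M → ∃ t ∈ Icc a b, γ t ∈ K

/-- A model domain `𝒟 ⊂ ℂ`: a bounded open subset of the right half-plane, symmetric
about `ℝ`, bounded by a Jordan curve through `0`, whose normalized Riemann map `g` onto
`𝔻` (with `g(𝒟 ∩ ℝ) = (-1,1)` and `g(0) = 1`) satisfies
`lim_{𝒟 ∋ ζ → 0} (g(ζ) - 1)/ζ` exists and is nonzero. -/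
def ModelDomain (𝒟 : Set ℂ) : Prop :=
  IsOpen 𝒟 ∧ Bornology.IsBounded 𝒟 ∧ 𝒟.Nonempty ∧
  (∀ ζ ∈ 𝒟, 0 < ζ.re) ∧
  (∀ ζ : ℂ, ζ ∈ 𝒟 ↔ (starRingEnd ℂ) ζ ∈ 𝒟) ∧
  (0 : ℂ) ∈ frontier 𝒟 ∧
  (∃ γ : AddCircle (1 : ℝ) → ℂ, Continuous γ ∧ Function.Injective γ ∧
     range γ = frontier 𝒟) ∧
  ∃ g : ℂ → ℂ, DifferentiableOn ℂ g 𝒟 ∧ BijOn g 𝒟 (ball (0 : ℂ) 1) ∧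
    g '' (𝒟 ∩ {ζ : ℂ | ζ.im = 0}) = {ζ : ℂ | ζ.im = 0 ∧ -1 < ζ.re ∧ ζ.re < 1} ∧
    ContinuousOn g (𝒟 ∪ {0}) ∧ g 0 = 1 ∧
    ∃ L : ℂ, L ≠ 0 ∧ Tendsto (fun ζ => (g ζ - 1) / ζ) (𝓝[𝒟] 0) (𝓝 L)

/-- The set whose supremum defines `M_Ω(r)` in the definition of a Goldilocks domain. -/
def goldiSet (M : Set E) (r : ℝ) : Set ℝ :=
  {t : ℝ | ∃ w ∈ M, ∃ v : E, delta M w ≤ r ∧ ‖v‖ = 1 ∧ t = (kobMetric M w v)⁻¹}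

/-- The Laplacian of a function `g : ℂ → ℝ` (so that `Δg = 4 ∂²g/∂w∂w̄`). -/
def laplacian2 (g : ℂ → ℝ) (w : ℂ) : ℝ :=
  fderiv ℝ (fun z => fderiv ℝ g z 1) w 1 + fderiv ℝ (fun z => fderiv ℝ g z Complex.I) w Complex.I




section AuxKob
open Complex

lemma frontier_cross {X : Type*} [TopologicalSpace X] {s M : Set X} (hs : IsPreconnected s)
    (hM : IsOpen M) (h1 : (s ∩ M).Nonempty) (h2 : (s \ M).Nonempty) :
    (s ∩ frontier M).Nonempty := by
  by_contra h
  rw [Set.not_nonempty_iff_eq_empty] at h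
  have hsub : s ⊆ M ∪ (closure M)ᶜ := by
    intro x hx
    by_cases hc : x ∈ closure M
    · left
      by_contra hxM
      have : x ∈ frontier M := ⟨hc, by rwa [hM.interior_eq]⟩
      exact absurd (Set.mem_inter hx this) (by simp [h])
    · exact Or.inr hc
  obtain ⟨x, hxs, hxM, hxc⟩ := hs M (closure M)ᶜ hM isClosed_closure.isOpen_compl hsub h1
    ⟨h2.choose, h2.choose_spec.1, fun hc => by
      have : h2.choose ∈ frontier M := ⟨hc, by rw [hM.interior_eq]; exact h2.choose_spec.2⟩
      exact absurd (Set.mem_inter h2.choose_spec.1 this) (by simp [h])⟩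
  exact hxc (subset_closure hxM)

lemma halfplane_deriv_bound {h : ℂ → ℂ} (hd : DifferentiableOn ℂ h (ball 0 1))
    (hre : ∀ ζ ∈ ball (0:ℂ) 1, (h ζ).re < 0) :
    ‖(deriv h 0)‖ ≤ 2 * |(h 0).re| := by
  have h0m : (0:ℂ) ∈ ball (0:ℂ) 1 := by simp
  set h0 : ℂ := h 0 with hh0
  have hre0 : h0.re < 0 := hre 0 h0m
  -- the Möbius quotient
  set ψ : ℂ → ℂ := fun ζ => (h ζ - h0) / (h ζ + (starRingEnd ℂ) h0) with hψ
  have hden : ∀ ζ ∈ ball (0:ℂ) 1, h ζ + (starRingEnd ℂ) h0 ≠ 0 := by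
    intro ζ hζ hc
    have : (h ζ + (starRingEnd ℂ) h0).re < 0 := by
      simp only [add_re, conj_re]
      linarith [hre ζ hζ]
    rw [hc] at this; simp at this
  have hdψ : DifferentiableOn ℂ ψ (ball 0 1) := by
    apply DifferentiableOn.div
    · exact hd.sub (differentiableOn_const _)
    · exact hd.add (differentiableOn_const _)
    · exact hden
  have hnormsq : ∀ ζ ∈ ball (0:ℂ) 1,
      normSq (h ζ - h0) < normSq (h ζ + (starRingEnd ℂ) h0) := by
    intro ζ hζ
    have h1 := hre ζ hζ
    simp only [normSq_apply, sub_re, sub_im, add_re, add_im, conj_re, conj_im]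
    nlinarith [hre0, h1]
  have hmaps : MapsTo ψ (ball (0:ℂ) 1) (ball (ψ 0) 1) := by
    intro ζ hζ
    have hψ0 : ψ 0 = 0 := by simp [hψ, ← hh0]
    rw [hψ0, mem_ball_zero_iff]
    rw [hψ, norm_div]
    rw [div_lt_one (by
      have := hden ζ hζ
      exact norm_pos_iff.mpr this)]
    have := hnormsq ζ hζ
    have h2 : (‖(h ζ - h0)‖)^2 < (‖(h ζ + (starRingEnd ℂ) h0)‖)^2 := by
      rwa [Complex.sq_norm, Complex.sq_norm]
    nlinarith [norm_nonneg (h ζ - h0),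
      norm_nonneg (h ζ + (starRingEnd ℂ) h0)]
  have hschwarz := Complex.norm_deriv_le_div_of_mapsTo_ball hdψ (hmaps.mono_right ball_subset_closedBall) one_pos
  -- compute deriv ψ 0
  have hdh0 : DifferentiableAt ℂ h 0 := hd.differentiableAt (isOpen_ball.mem_nhds h0m)
  have hdiv : HasDerivAt ψ ((deriv h 0 * (h 0 + (starRingEnd ℂ) h0) -
      (h 0 - h0) * deriv h 0) / (h 0 + (starRingEnd ℂ) h0)^2) 0 :=
    (hdh0.hasDerivAt.sub_const h0).div ((hdh0.hasDerivAt.add_const _)) (hden 0 h0m)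
  have hd0 : deriv ψ 0 = deriv h 0 / (h0 + (starRingEnd ℂ) h0) := by
    rw [hdiv.deriv, ← hh0]
    rw [sub_self, zero_mul, sub_zero, sq]
    rw [mul_div_assoc]
    congr 1
    have hne : h0 + (starRingEnd ℂ) h0 ≠ 0 := by rw [hh0]; exact hden 0 h0m
    rw [div_mul_cancel_left₀ hne]
  rw [hd0, norm_div] at hschwarz
  have habs : ‖(h0 + (starRingEnd ℂ) h0)‖ = 2 * |h0.re| := by
    have : h0 + (starRingEnd ℂ) h0 = (2 * h0.re : ℝ) := by
      apply Complex.ext <;> simp [conj_re, conj_im] <;> ring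
    rw [this, Complex.norm_real, Real.norm_eq_abs, abs_mul]
    norm_num
  rw [habs] at hschwarz
  have hpos : (0:ℝ) < 2 * |h0.re| := by
    have : 0 < |h0.re| := abs_pos.mpr (ne_of_lt hre0)
    linarith
  calc ‖(deriv h 0)‖ = ‖(deriv h 0)‖ / (2*|h0.re|) * (2*|h0.re|) := by
        rw [div_mul_cancel₀ _ (ne_of_gt hpos)]
    _ ≤ 1 * (2*|h0.re|) := by
        apply mul_le_mul_of_nonneg_right _ (le_of_lt hpos)
        simpa using hschwarz
    _ = 2 * |h0.re| := one_mul _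

lemma convex_disc_bound {M : Set E} (hMo : IsOpen M) (hconv : Convex ℝ M)
    {g : ℂ → E} (hg : DifferentiableOn ℂ g (ball 0 1)) (hmaps : MapsTo g (ball 0 1) M)
    {u : E} {ζ0 β : ℂ} (hpf : g 0 + ζ0 • u ∈ frontier M)
    (hβ : deriv g 0 = β • u) :
    ‖β‖ ≤ 2 * ‖ζ0‖ := by
  have h0m : (0:ℂ) ∈ ball (0:ℂ) 1 := by simp
  set w : E := g 0 with hw
  set p : E := w + ζ0 • u with hp
  have hpM : p ∉ M := by
    intro hc
    rw [frontier, hMo.interior_eq] at hpf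
    exact hpf.2 hc
  obtain ⟨φ, hφ⟩ := geometric_hahn_banach_open_point hconv hMo hpM
  set ℓ : E →L[ℂ] ℂ := φ.extendTo𝕜' with hℓ
  have hre : ∀ x : E, (ℓ x).re = φ x := by
    intro x
    rw [hℓ]
    exact StrongDual.re_extendRCLike_apply (𝕜 := ℂ) φ x
  set h : ℂ → ℂ := fun ζ => ℓ (g ζ) - ℓ p with hh
  have hhd : DifferentiableOn ℂ h (ball 0 1) :=
    (ℓ.differentiable.comp_differentiableOn hg).sub (differentiableOn_const _)
  have hhre : ∀ ζ ∈ ball (0:ℂ) 1, (h ζ).re < 0 := by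
    intro ζ hζ
    have := hφ (g ζ) (hmaps hζ)
    simp only [hh, sub_re, hre]
    linarith
  have hbound := halfplane_deriv_bound hhd hhre
  -- compute h 0 and deriv h 0
  have hh0 : h 0 = -(ζ0 * ℓ u) := by
    simp only [hh, ← hw, ← map_sub]
    have : w - p = -(ζ0 • u) := by rw [hp]; abel
    rw [this, map_neg, _root_.map_smul, smul_eq_mul]
  have hdg0 : DifferentiableAt ℂ g 0 := hg.differentiableAt (isOpen_ball.mem_nhds h0m)
  have hdh : HasDerivAt h (ℓ (deriv g 0)) 0 :=
    (ℓ.hasFDerivAt.comp_hasDerivAt 0 hdg0.hasDerivAt).sub_const _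
  have hderiv : deriv h 0 = β * ℓ u := by
    rw [hdh.deriv, hβ, _root_.map_smul, smul_eq_mul]
  have hlu : ℓ u ≠ 0 := by
    intro hc
    have h1 := hhre 0 h0m
    rw [hh0, hc, mul_zero, neg_zero] at h1
    simp at h1
  have h2 : |(h 0).re| ≤ ‖ζ0‖ * ‖(ℓ u)‖ := by
    calc |(h 0).re| ≤ ‖(h 0)‖ := Complex.abs_re_le_norm _
      _ = ‖ζ0‖ * ‖(ℓ u)‖ := by rw [hh0, norm_neg, norm_mul]
  rw [hderiv, norm_mul] at hbound
  have hlupos : 0 < ‖(ℓ u)‖ := norm_pos_iff.mpr hlu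
  have : ‖β‖ * ‖(ℓ u)‖ ≤ 2 * ‖ζ0‖ * ‖(ℓ u)‖ := by
    calc ‖β‖ * ‖(ℓ u)‖ ≤ 2 * |(h 0).re| := hbound
      _ ≤ 2 * (‖ζ0‖ * ‖(ℓ u)‖) := by linarith
      _ = 2 * ‖ζ0‖ * ‖(ℓ u)‖ := by ring
  exact le_of_mul_le_mul_right this hlupos


end AuxKob

set_option maxHeartbeats 1000000 in
/-- Lemma 5.3 of the paper. A lower bound for the Kobayashi metric
near a locally log-type convex boundary point. -/
theorem kobayashi_metric_lower_bound_LTC {n : ℕ} (hn : 2 ≤ n) (Ω : Set (Cn n))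
    (hΩo : IsOpen Ω) (hΩc : IsConnected Ω) (hΩb : Bornology.IsBounded Ω)
    (q : Cn n) (hq : q ∈ frontier Ω)
    (𝒪 : Set (Cn n)) (h𝒪o : IsOpen 𝒪) (hq𝒪 : q ∈ 𝒪)
    (hltc : LogTypeConvex (𝒪 ∩ Ω)) :
    ∃ W : Set (Cn n), IsOpen W ∧ q ∈ W ∧ IsCompact (closure W) ∧ closure W ⊆ 𝒪 ∧
      ∃ c : ℝ, 0 < c ∧ ∃ ν : ℝ, 0 < ν ∧
        ∀ w ∈ W ∩ Ω, ∀ v : Cn n,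
          c * ‖v‖ * Real.log (1 / delta Ω w) ^ (1 + ν) ≤ kobMetric Ω w v := by
  obtain ⟨hMb, hMconv, hMne, C, hC, ν, hν, hLTC⟩ := hltc
  set M : Set (Cn n) := 𝒪 ∩ Ω with hM
  have hMo : IsOpen M := h𝒪o.inter hΩo
  have hqΩ : q ∉ Ω := by
    rw [hΩo.frontier_eq] at hq; exact hq.2
  -- radius of bounded domain
  obtain ⟨R0, hR0⟩ := hΩb.subset_ball 0
  set R : ℝ := max R0 1 with hR
  have hR1 : (1:ℝ) ≤ R := le_max_right _ _
  have hRpos : (0:ℝ) < R := lt_of_lt_of_le one_pos hR1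
  have hΩR : Ω ⊆ ball 0 R := hR0.trans (ball_subset_ball (le_max_left _ _))
  -- size of neighbourhood
  obtain ⟨ρ0, hρ0, hρball⟩ := Metric.isOpen_iff.mp h𝒪o q hq𝒪
  set ρ : ℝ := min (ρ0/2) (1/2) with hρdef
  have hρ : 0 < ρ := lt_min (by linarith) (by norm_num)
  have hρhalf : ρ ≤ 1/2 := min_le_right _ _
  have h2ρ : ball q (2*ρ) ⊆ 𝒪 := by
    refine (ball_subset_ball ?_).trans hρball
    have := min_le_left (ρ0/2) (1/2)
    linarith
  set s : ℝ := ρ / (2*R) with hs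
  have hspos : 0 < s := div_pos hρ (by linarith)
  have hslt : s ≤ 1/4 := by
    rw [hs, div_le_iff₀ (by linarith)]
    nlinarith
  refine ⟨ball q ρ, isOpen_ball, mem_ball_self hρ, isBounded_ball.isCompact_closure, ?_,
    s/(2*C), div_pos hspos (by linarith), ν, hν, ?_⟩
  · refine closure_ball_subset_closedBall.trans ?_
    refine subset_trans ?_ h2ρ
    intro x hx
    rw [mem_closedBall] at hx
    rw [mem_ball]
    linarith
  intro w hw v
  have hwq : dist w q < ρ := mem_ball.mp hw.1
  have hwΩ : w ∈ Ω := hw.2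
  have hwM : w ∈ M := ⟨h2ρ (by rw [mem_ball]; linarith), hwΩ⟩
  have hballw : ball w ρ ⊆ 𝒪 := by
    intro x hx
    apply h2ρ
    rw [mem_ball] at hx ⊢
    calc dist x q ≤ dist x w + dist w q := dist_triangle _ _ _
      _ < ρ + ρ := by linarith
      _ = 2*ρ := by ring
  -- distance facts
  have hqMc : q ∈ Mᶜ := fun hc => hqΩ hc.2
  have hδΩpos : 0 < delta Ω w := by
    rw [delta]
    exact (hΩo.isClosed_compl.notMem_iff_infDist_pos ⟨q, hqΩ⟩).mp (by simp [hwΩ])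
  have hδΩlt : delta Ω w < 1 := by
    rw [delta]
    calc Metric.infDist w Ωᶜ ≤ dist w q := Metric.infDist_le_dist_of_mem hqΩ
      _ < ρ := hwq
      _ < 1 := by linarith
  have hδMpos : 0 < delta M w := by
    rw [delta]
    exact (hMo.isClosed_compl.notMem_iff_infDist_pos ⟨q, hqMc⟩).mp (by simp [hwM])
  have hδMle : delta M w ≤ delta Ω w := by
    rw [delta, delta]
    exact Metric.infDist_le_infDist_of_subset (compl_subset_compl.mpr inter_subset_right)
      ⟨q, hqΩ⟩
  have hδMlt : delta M w < 1 := lt_of_le_of_lt hδMle hδΩlt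
  have hlogΩpos : 0 < Real.log (1 / delta Ω w) := by
    apply Real.log_pos
    rw [one_div]
    exact (one_lt_inv_iff₀).mpr ⟨hδΩpos, hδΩlt⟩
  have hlogle : Real.log (1 / delta Ω w) ≤ |Real.log (delta M w)| := by
    have hlM : Real.log (delta M w) < 0 := Real.log_neg hδMpos hδMlt
    rw [abs_of_neg hlM, one_div, Real.log_inv]
    have := Real.log_le_log hδMpos hδMle
    linarith
  set LΩ : ℝ := Real.log (1 / delta Ω w) ^ (1 + ν) with hLΩ
  set LM : ℝ := |Real.log (delta M w)| ^ (1 + ν) with hLM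
  have hLMpos : 0 < LM := by
    apply Real.rpow_pos_of_pos
    rw [abs_pos]
    exact ne_of_lt (Real.log_neg hδMpos hδMlt)
  have hLle : LΩ ≤ LM := Real.rpow_le_rpow (le_of_lt hlogΩpos) hlogle (by positivity)
  rcases eq_or_ne v 0 with rfl | hv
  · simp only [norm_zero, mul_zero, zero_mul]
    apply Real.sInf_nonneg
    rintro r ⟨α, rfl, -⟩
    exact norm_nonneg α
  -- v ≠ 0 case
  have hvn : (0:ℝ) < ‖v‖ := norm_pos_iff.mpr hv
  set u : Cn n := ‖v‖⁻¹ • v with hu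
  have hun : ‖u‖ = 1 := by
    rw [hu, norm_smul, norm_inv, norm_norm, inv_mul_cancel₀ (ne_of_gt hvn)]
  rw [kobMetric]
  apply le_csInf
  · -- nonempty: explicit disc
    set t : ℝ := delta Ω w with ht
    set a : Cn n := (t/2) • u with ha
    have hna : ‖a‖ = t/2 := by rw [ha, norm_smul, hun, mul_one, Real.norm_eq_abs,
      abs_of_pos (by linarith)]
    refine ⟨‖(((2/t) * ‖v‖ : ℝ) : ℂ)‖, ⟨((2/t) * ‖v‖ : ℝ), rfl,
      fun ζ => w + ζ • a, ?_, ?_, by simp, ?_⟩⟩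
    · apply DifferentiableOn.const_add
      exact (differentiable_id.smul_const a).differentiableOn
    · intro ζ hζ
      rw [mem_ball_zero_iff] at hζ
      by_contra hout
      have : Metric.infDist w Ωᶜ ≤ dist w (w + ζ • a) := Metric.infDist_le_dist_of_mem hout
      rw [dist_eq_norm] at this
      have h1 : ‖w - (w + ζ • a)‖ = ‖ζ‖ * ‖a‖ := by
        rw [show w - (w + ζ • a) = -(ζ • a) by abel, norm_neg, norm_smul]
      rw [h1, hna] at this
      have : t ≤ ‖ζ‖ * (t/2) := this
      nlinarith [norm_nonneg ζ]
    · have hda : HasDerivAt (fun ζ : ℂ => w + ζ • a) a 0 := by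
        simpa using ((hasDerivAt_id (0:ℂ)).smul_const a).const_add w
      have htne : t ≠ 0 := ne_of_gt hδΩpos
      have hvne : ‖v‖ ≠ 0 := ne_of_gt hvn
      rw [hda.deriv, ha, hu, Complex.coe_smul, smul_smul, smul_smul]
      rw [show 2/t*‖v‖*(t/2)*‖v‖⁻¹ = 1 by field_simp, one_smul]
  · rintro r ⟨α, rfl, f, hfd, hfmaps, hf0, hfv⟩
    have h0m : (0:ℂ) ∈ ball (0:ℂ) 1 := by simp
    have hα0 : α ≠ 0 := by
      rintro rfl
      rw [zero_smul] at hfv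
      exact hv hfv.symm
    have hαpos : 0 < ‖α‖ := norm_pos_iff.mpr hα0
    -- rescaled disc
    set g : ℂ → Cn n := fun ζ => f ((s:ℂ) * ζ) with hg
    have hsmem : ∀ ζ ∈ ball (0:ℂ) 1, (s:ℂ) * ζ ∈ ball (0:ℂ) 1 := by
      intro ζ hζ
      rw [mem_ball_zero_iff] at hζ ⊢
      rw [norm_mul, Complex.norm_real, Real.norm_eq_abs, abs_of_pos hspos]
      nlinarith [norm_nonneg ζ]
    have hgd : DifferentiableOn ℂ g (ball 0 1) :=
      hfd.comp ((differentiable_const (s:ℂ)).mul differentiable_id).differentiableOn hsmem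
    have hg0 : g 0 = w := by rw [hg]; simp [hf0]
    have hfball : MapsTo f (ball (0:ℂ) 1) (ball (f 0) (2*R)) := by
      intro ζ hζ
      rw [mem_ball]
      have h1 : f ζ ∈ ball (0 : Cn n) R := hΩR (hfmaps hζ)
      have h2 : f 0 ∈ ball (0 : Cn n) R := hΩR (hfmaps h0m)
      rw [mem_ball] at h1 h2
      calc dist (f ζ) (f 0) ≤ dist (f ζ) 0 + dist 0 (f 0) := dist_triangle _ _ _
        _ = dist (f ζ) 0 + dist (f 0) 0 := by rw [dist_comm (0 : Cn n)]
        _ < R + R := by linarith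
        _ = 2*R := by ring
    have hgmaps : MapsTo g (ball (0:ℂ) 1) M := by
      intro ζ hζ
      have hmem := hsmem ζ hζ
      have hd := Complex.dist_le_div_mul_dist_of_mapsTo_ball hfd (hfball.mono_right ball_subset_closedBall) hmem
      have hdist : dist (g ζ) w < ρ := by
        rw [hg, ← hf0]
        calc dist (f ((s:ℂ)*ζ)) (f 0) ≤ 2*R/1 * dist ((s:ℂ)*ζ) 0 := hd
          _ = 2*R * (s * ‖ζ‖) := by
              rw [dist_zero_right, norm_mul, Complex.norm_real, Real.norm_eq_abs,
                abs_of_pos hspos]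
              ring
          _ < 2*R * (s * 1) := by
              apply mul_lt_mul_of_pos_left _ (by linarith)
              exact mul_lt_mul_of_pos_left (mem_ball_zero_iff.mp hζ) hspos
          _ = ρ := by rw [hs]; field_simp
      exact ⟨hballw (mem_ball.mpr hdist), hfmaps hmem⟩
    have hdf0 : DifferentiableAt ℂ f 0 := hfd.differentiableAt (isOpen_ball.mem_nhds h0m)
    have hgderiv : deriv g 0 = (s:ℂ) • deriv f 0 := by
      have hmul : HasDerivAt (fun ζ : ℂ => (s:ℂ) * ζ) (s:ℂ) 0 := by
        simpa using (hasDerivAt_id (0:ℂ)).const_mul (s:ℂ)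
      have hcomp : HasDerivAt g ((s:ℂ) • deriv f 0) 0 := by
        have hf' : HasDerivAt f (deriv f 0) ((s:ℂ) * 0) := by
          rw [mul_zero]; exact hdf0.hasDerivAt
        exact HasDerivAt.scomp 0 hf' hmul
      exact hcomp.deriv
    -- directional distance
    set Sd : Set ℝ := {r : ℝ | 0 < r ∧ ∀ ζ : ℂ, ‖ζ‖ < r → w + ζ • u ∈ M} with hSd
    have hSdbdd : BddAbove Sd := by
      refine ⟨R + ‖w‖, fun r hr => ?_⟩
      by_contra hcon
      push_neg at hcon
      have hmem : w + ((R + ‖w‖ : ℝ) : ℂ) • u ∈ M := by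
        apply hr.2
        rw [Complex.norm_real, Real.norm_eq_abs, abs_of_pos (by positivity)]
        exact hcon
      have : w + ((R + ‖w‖ : ℝ) : ℂ) • u ∈ ball (0 : Cn n) R := hΩR hmem.2
      rw [mem_ball, dist_zero_right] at this
      have h1 : ‖((R + ‖w‖ : ℝ) : ℂ) • u‖ - ‖w‖ ≤ ‖w + ((R + ‖w‖ : ℝ) : ℂ) • u‖ := by
        have h2 : ‖w + ((R + ‖w‖ : ℝ) : ℂ) • u - w‖ ≤ ‖w + ((R + ‖w‖ : ℝ) : ℂ) • u‖ + ‖w‖ :=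
          norm_sub_le _ _
        rw [add_sub_cancel_left] at h2
        linarith
      have h3 : ‖((R + ‖w‖ : ℝ) : ℂ) • u‖ = R + ‖w‖ := by
        rw [norm_smul, hun, mul_one, Complex.norm_real, Real.norm_eq_abs,
          abs_of_pos (by positivity)]
      rw [h3] at h1
      linarith
    have hd0 : 0 ≤ dirDist M w v := Real.sSup_nonneg (fun r hr => le_of_lt hr.1)
    set d : ℝ := dirDist M w v with hd
    -- the key per-epsilon bound
    have hkey : ∀ ε : ℝ, 0 < ε → s * ‖v‖ ≤ 2 * (d + ε) * ‖α‖ := by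
      intro ε hε
      have hdε : 0 < d + ε := by linarith
      have hnot : d + ε ∉ Sd := by
        intro hmem
        have : d + ε ≤ d := le_csSup hSdbdd hmem
        linarith
      rw [hSd, mem_setOf_eq, not_and_or] at hnot
      have hout : ∃ ζ : ℂ, ‖ζ‖ < d + ε ∧ w + ζ • u ∉ M := by
        rcases hnot with h1 | h2
        · exact absurd hdε h1
        · push_neg at h2; exact h2
      obtain ⟨ζ, hζlt, hζout⟩ := hout
      -- frontier crossing on the segment
      set γ : ℝ → Cn n := fun t => w + ((t:ℂ) * ζ) • u with hγ
      have hγc : ContinuousOn γ (Icc 0 1) := by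
        apply ContinuousOn.add continuousOn_const
        exact (((Complex.continuous_ofReal.comp continuous_id).mul
          continuous_const).smul continuous_const).continuousOn
      have hcross := frontier_cross ((isPreconnected_Icc).image γ hγc) hMo
        ⟨γ 0, ⟨0, by simp, rfl⟩, by
          rw [hγ]; simpa using hwM⟩
        ⟨γ 1, ⟨1, by simp, rfl⟩, by
          rw [hγ]; simpa using hζout⟩
      obtain ⟨x, ⟨t, ht, rfl⟩, hxf⟩ := hcross
      set ζ0 : ℂ := (t:ℂ) * ζ with hζ0
      have hζ0lt : ‖ζ0‖ < d + ε := by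
        rw [hζ0, norm_mul, Complex.norm_real, Real.norm_eq_abs, abs_of_nonneg ht.1]
        calc t * ‖ζ‖ ≤ 1 * ‖ζ‖ := by
              apply mul_le_mul_of_nonneg_right ht.2 (norm_nonneg _)
          _ = ‖ζ‖ := one_mul _
          _ < d + ε := hζlt
      -- apply convex bound
      set β : ℂ := (s:ℂ) * (‖v‖:ℂ) / α with hβdef
      have hβ : deriv g 0 = β • u := by
        have hD0 : deriv f 0 = α⁻¹ • v := by
          rw [← hfv, smul_smul, inv_mul_cancel₀ hα0, one_smul]
        have hvC : (‖v‖ : ℂ) ≠ 0 := by exact_mod_cast ne_of_gt hvn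
        rw [hgderiv, hD0, hu, ← Complex.coe_smul ‖v‖⁻¹ v, smul_smul, smul_smul]
        congr 1
        rw [hβdef, Complex.ofReal_inv]
        field_simp
      have hpf : g 0 + ζ0 • u ∈ frontier M := by rw [hg0]; exact hxf
      have hcb := convex_disc_bound hMo hMconv hgd hgmaps hpf hβ
      have hβabs : ‖β‖ = s * ‖v‖ / ‖α‖ := by
        rw [hβdef, norm_div, norm_mul, Complex.norm_real, Complex.norm_real, Real.norm_eq_abs,
          Real.norm_eq_abs, abs_of_pos hspos, abs_of_pos hvn]
      rw [hβabs, div_le_iff₀ hαpos] at hcb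
      calc s * ‖v‖ ≤ 2 * ‖ζ0‖ * ‖α‖ := hcb
        _ ≤ 2 * (d + ε) * ‖α‖ := by
            apply mul_le_mul_of_nonneg_right _ (le_of_lt hαpos)
            linarith
    -- pass to the limit
    have hlim : s * ‖v‖ ≤ 2 * d * ‖α‖ := by
      apply le_of_forall_pos_le_add
      intro ε' hε'
      have h := hkey (ε' / (2 * ‖α‖)) (by positivity)
      calc s * ‖v‖ ≤ 2 * (d + ε' / (2 * ‖α‖)) * ‖α‖ := h
        _ = 2 * d * ‖α‖ + ε' := by field_simp
    -- use log-type convexity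
    have hdle : d ≤ C / LM := hLTC w hwM v hv
    have h4 : s * ‖v‖ ≤ 2 * ‖α‖ * (C / LM) := by
      calc s * ‖v‖ ≤ 2 * d * ‖α‖ := hlim
        _ = 2 * ‖α‖ * d := by ring
        _ ≤ 2 * ‖α‖ * (C / LM) := by
            apply mul_le_mul_of_nonneg_left hdle (by positivity)
    have h5 : s * ‖v‖ * LM ≤ 2 * ‖α‖ * C := by
      rw [← le_div_iff₀ hLMpos]
      calc s * ‖v‖ ≤ 2 * ‖α‖ * (C / LM) := h4
        _ = 2 * ‖α‖ * C / LM := by ring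
    calc s / (2*C) * ‖v‖ * LΩ ≤ s / (2*C) * ‖v‖ * LM := by
          apply mul_le_mul_of_nonneg_left hLle (by positivity)
      _ = s * ‖v‖ * LM / (2*C) := by ring
      _ ≤ 2 * ‖α‖ * C / (2*C) := by gcongr
      _ = ‖α‖ := by field_simp


end Paper
end
end

section
/- Let Ω ⊂ ℂⁿ, n ≥ 2, be a bounded domain, q ∈ ∂Ω, and suppose there exists a neighbourhood 𝒪 of q such that 𝒪 ∩ Ω is log-type convex. Then 𝒪 ∩ Ω is a Goldilocks domain; that is: (1) for some (hence any) ε > 0, ∫₀^ε M_{𝒪∩Ω}(r)/r dr < ∞, where M_{𝒪∩Ω}(r) := sup{1/k_{𝒪∩Ω}(w;v) : δ_{𝒪∩Ω}(w) ≤ r, ‖v‖ = 1}; and (2) for each w₀ ∈ 𝒪 ∩ Ω there exist constants α, β > 0 (depending on w₀) such that K_{𝒪∩Ω}(w, w₀) ≤ α + β log(1/δ_{𝒪∩Ω}(w)) for all w ∈ 𝒪 ∩ Ω. -/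
/-
Common definitions for formalizing results from
"Local continuous extension of proper holomorphic maps: low-regularity and
infinite-type boundaries" (A. Banik).
-/

open Metric Set Filter MeasureTheory
open scoped Real ENNReal ComplexInnerProductSpace Topology

noncomputable section

namespace Paper

variable {E : Type*} [NormedAddCommGroup E] [InnerProductSpace ℂ E]

set_option linter.unusedSectionVars false

section AuxLemmas

lemma ball_delta_subset (M : Set E) (z : E) : ball z (delta M z) ⊆ M := by
  intro y hy
  by_contra hyM
  exact absurd (Metric.infDist_le_dist_of_mem (s := Mᶜ) (x := z) hyM)
    (by rw [dist_comm]; exact not_le.2 (mem_ball.1 hy))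

lemma delta_pos {M : Set E} (hMo : IsOpen M) (hMc : Mᶜ.Nonempty) {z : E} (hz : z ∈ M) :
    0 < delta M z :=
  (hMo.isClosed_compl.notMem_iff_infDist_pos hMc).1 (by simp [hz])

lemma delta_le_dist {M : Set E} {x : E} (hx : x ∉ M) (z : E) : delta M z ≤ dist z x :=
  Metric.infDist_le_dist_of_mem hx

lemma le_delta {M : Set E} (hMc : Mᶜ.Nonempty) {z : E} {b : ℝ}
    (h : ∀ y, y ∉ M → b ≤ dist z y) : b ≤ delta M z := by
  by_contra hlt
  obtain ⟨y, hy, hd⟩ := (Metric.infDist_lt_iff hMc).1 (not_le.1 hlt)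
  exact absurd (h y hy) (not_le.2 hd)

lemma delta_concave {M : Set E} (hconv : Convex ℝ M) (hMo : IsOpen M) (hMc : Mᶜ.Nonempty)
    {a b : E} (ha : a ∈ M) (hb : b ∈ M) {t : ℝ} (ht0 : 0 ≤ t) (ht1 : t ≤ 1) :
    (1 - t) * delta M a + t * delta M b ≤ delta M ((1 - t) • a + t • b) := by
  set S := (1 - t) * delta M a + t * delta M b with hS
  have hda := delta_pos hMo hMc ha
  have hdb := delta_pos hMo hMc hb
  have hSpos : 0 < S := by
    rw [hS]
    rcases lt_or_eq_of_le ht1 with h | h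
    · have h2 : 0 ≤ t * delta M b := mul_nonneg ht0 hdb.le
      nlinarith
    · rw [h]; norm_num; exact hdb
  apply le_delta hMc
  intro y hy
  by_contra hd
  push_neg at hd
  apply hy
  set c := (1 - t) • a + t • b with hc
  set u := y - c with hu
  have hnu : ‖u‖ < S := by
    rw [hu, ← dist_eq_norm, dist_comm]
    exact hd
  have hmem : ∀ d : E, 0 < delta M d → d ∈ M → d + (delta M d / S) • u ∈ M := by
    intro d hdpos hdM
    apply ball_delta_subset M d
    rw [mem_ball, dist_eq_norm]
    have he : d + (delta M d / S) • u - d = (delta M d / S) • u := by abel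
    rw [he, norm_smul, Real.norm_eq_abs, abs_of_pos (by positivity)]
    calc delta M d / S * ‖u‖ < delta M d / S * S := by
          exact mul_lt_mul_of_pos_left hnu (by positivity)
      _ = delta M d := by field_simp
  have h1 : a + (delta M a / S) • u ∈ M := hmem a hda ha
  have h2 : b + (delta M b / S) • u ∈ M := hmem b hdb hb
  have key : y = (1 - t) • (a + (delta M a / S) • u) + t • (b + (delta M b / S) • u) := by
    have hy' : y = c + u := by rw [hu]; abel
    have hcomb : ((1 - t) * (delta M a / S) + t * (delta M b / S)) = 1 := by
      field_simp [hS]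
      exact hS.symm
    rw [hy', hc]
    rw [smul_add, smul_add, smul_smul, smul_smul]
    have h3 : ((1 - t) * (delta M a / S)) • u + (t * (delta M b / S)) • u = u := by
      rw [← add_smul, hcomb, one_smul]
    calc (1 - t) • a + t • b + u
        = (1 - t) • a + t • b + (((1 - t) * (delta M a / S)) • u + (t * (delta M b / S)) • u) := by rw [h3]
      _ = (1 - t) • a + ((1 - t) * (delta M a / S)) • u + (t • b + (t * (delta M b / S)) • u) := by abel
  rw [key]
  exact hconv h1 h2 (by linarith) ht0 (by ring)


lemma poincare_nonneg {σ : ℝ} (h0 : 0 ≤ σ) (h1 : σ < 1) : 0 ≤ poincare σ := by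
  unfold poincare
  have : (1 : ℝ) ≤ (1 + σ) / (1 - σ) := by
    rw [le_div_iff₀ (by linarith)]
    linarith
  have := Real.log_nonneg this
  linarith

lemma poincare_le_half {σ : ℝ} (h0 : 0 ≤ σ) (h1 : σ ≤ 1 / 2) : poincare σ ≤ poincare (1 / 2) := by
  unfold poincare
  have hlog : Real.log ((1 + σ) / (1 - σ)) ≤ Real.log ((1 + 1/2) / (1 - 1/2)) := by
    apply Real.log_le_log (div_pos (by linarith) (by linarith))
    rw [div_le_div_iff₀ (by linarith) (by norm_num)]
    nlinarith
  linarith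

lemma poincare_half_pos : 0 < poincare (1 / 2) := by
  unfold poincare
  have : (1 : ℝ) < (1 + 1/2) / (1 - 1/2) := by norm_num
  have := Real.log_pos this
  linarith

lemma lempert_nonneg (D : Set E) (z w : E) : 0 ≤ lempert D z w := by
  apply Real.sInf_nonneg
  rintro r ⟨σ, h0, h1, rfl, -⟩
  exact poincare_nonneg h0 h1

lemma lempert_bddBelow (D : Set E) (z w : E) :
    BddBelow {r : ℝ | ∃ σ : ℝ, 0 ≤ σ ∧ σ < 1 ∧ r = poincare σ ∧ ∃ f : ℂ → E,
      DifferentiableOn ℂ f (ball (0 : ℂ) 1) ∧ MapsTo f (ball (0 : ℂ) 1) D ∧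
      f 0 = z ∧ f (σ : ℂ) = w} := by
  refine ⟨0, ?_⟩
  rintro r ⟨σ, h0, h1, rfl, -⟩
  exact poincare_nonneg h0 h1

/-- One-step estimate: if `z₂` is within half the distance to the boundary from `z₁`,
the Lempert function is at most `poincare (1/2)`. -/
lemma lempert_le_step {M : Set E} (hMo : IsOpen M) (hMc : Mᶜ.Nonempty)
    {z₁ z₂ : E} (h1 : z₁ ∈ M) (hle : ‖z₂ - z₁‖ ≤ delta M z₁ / 2) :
    lempert M z₁ z₂ ≤ poincare (1 / 2) := by
  have hd := delta_pos hMo hMc h1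
  rcases eq_or_ne z₂ z₁ with rfl | hne
  · -- constant disc
    have hmem : poincare 0 ∈ {r : ℝ | ∃ σ : ℝ, 0 ≤ σ ∧ σ < 1 ∧ r = poincare σ ∧ ∃ f : ℂ → E,
        DifferentiableOn ℂ f (ball (0 : ℂ) 1) ∧ MapsTo f (ball (0 : ℂ) 1) M ∧
        f 0 = z₂ ∧ f (σ : ℂ) = z₂} := by
      exact ⟨0, le_refl _, by norm_num, rfl, fun _ => z₂, differentiableOn_const _,
        fun x _ => h1, rfl, rfl⟩
    have := csInf_le (lempert_bddBelow M z₂ z₂) hmem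
    refine le_trans (le_trans this ?_) (poincare_le_half le_rfl (by norm_num))
    simp [poincare]
  · set σ : ℝ := ‖z₂ - z₁‖ / delta M z₁ with hσ
    have hnz : 0 < ‖z₂ - z₁‖ := by
      rw [norm_pos_iff, sub_ne_zero]; exact hne
    have hσ0 : 0 < σ := div_pos hnz hd
    have hσh : σ ≤ 1 / 2 := by
      rw [hσ, div_le_div_iff₀ hd (by norm_num)]
      linarith
    set u : E := (σ⁻¹ : ℝ) • (z₂ - z₁) with hu
    have hnu : ‖u‖ = delta M z₁ := by
      rw [hu, norm_smul, Real.norm_eq_abs, abs_of_pos (by positivity), hσ, inv_div]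
      exact div_mul_cancel₀ _ (ne_of_gt hnz)
    have hmem : poincare σ ∈ {r : ℝ | ∃ σ' : ℝ, 0 ≤ σ' ∧ σ' < 1 ∧ r = poincare σ' ∧ ∃ f : ℂ → E,
        DifferentiableOn ℂ f (ball (0 : ℂ) 1) ∧ MapsTo f (ball (0 : ℂ) 1) M ∧
        f 0 = z₁ ∧ f ((σ' : ℝ) : ℂ) = z₂} := by
      refine ⟨σ, hσ0.le, by linarith, rfl, fun ζ => z₁ + ζ • u, ?_, ?_, by simp, ?_⟩
      · apply DifferentiableOn.const_add
        exact (differentiable_id.smul_const u).differentiableOn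
      · intro ζ hζ
        apply ball_delta_subset M z₁
        rw [mem_ball, dist_eq_norm]
        have : z₁ + ζ • u - z₁ = ζ • u := by abel
        rw [this, norm_smul, hnu]
        calc ‖ζ‖ * delta M z₁ < 1 * delta M z₁ := by
              apply mul_lt_mul_of_pos_right _ hd
              simpa using mem_ball_zero_iff.1 hζ
          _ = delta M z₁ := one_mul _
      · show z₁ + ((σ : ℝ) : ℂ) • u = z₂
        have hcs : ((σ : ℝ) : ℂ) • u = σ • u := by
          simp [Complex.coe_smul]
        rw [hcs, hu, smul_smul]
        have hσne : σ ≠ 0 := ne_of_gt hσ0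
        rw [mul_inv_cancel₀ hσne, one_smul]
        abel
    exact le_trans (csInf_le (lempert_bddBelow M z₁ z₂) hmem) (poincare_le_half hσ0.le hσh)

lemma kobDist_bddBelow (D : Set E) (z w : E) :
    BddBelow {r : ℝ | ∃ m : ℕ, ∃ c : ℕ → E, c 0 = z ∧ c m = w ∧ (∀ i, i ≤ m → c i ∈ D) ∧
      r = ∑ i ∈ Finset.range m, lempert D (c i) (c (i + 1))} := by
  refine ⟨0, ?_⟩
  rintro r ⟨m, c, -, -, -, rfl⟩
  exact Finset.sum_nonneg fun i _ => lempert_nonneg D _ _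

/-- A chain of small steps along the segment from `w` to `w₀` bounds the Kobayashi distance. -/
lemma kobDist_le_of_chain {M : Set E} (hconv : Convex ℝ M) (hMo : IsOpen M) (hMc : Mᶜ.Nonempty)
    {w w₀ : E} (hw : w ∈ M) (hw₀ : w₀ ∈ M) (t : ℕ → ℝ) (m : ℕ)
    (h0 : t 0 = 0) (hm : t m = 1) (hrange : ∀ i, 0 ≤ t i ∧ t i ≤ 1)
    (hmono : ∀ i, t i ≤ t (i + 1))
    (hstep : ∀ i, i < m → (t (i + 1) - t i) * ‖w₀ - w‖ ≤
      ((1 - t i) * delta M w + t i * delta M w₀) / 2) :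
    kobDist M w w₀ ≤ m * poincare (1 / 2) := by
  set c : ℕ → E := fun i => (1 - t i) • w + t i • w₀ with hc
  have hcM : ∀ i, c i ∈ M := fun i =>
    hconv hw hw₀ (by linarith [(hrange i).2]) (hrange i).1 (by ring)
  have hdel : ∀ i, (1 - t i) * delta M w + t i * delta M w₀ ≤ delta M (c i) := fun i =>
    delta_concave hconv hMo hMc hw hw₀ (hrange i).1 (hrange i).2
  have hsum : ∑ i ∈ Finset.range m, lempert M (c i) (c (i + 1)) ≤ m * poincare (1 / 2) := by
    calc ∑ i ∈ Finset.range m, lempert M (c i) (c (i + 1))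
        ≤ ∑ _i ∈ Finset.range m, poincare (1 / 2) := by
          apply Finset.sum_le_sum
          intro i hi
          apply lempert_le_step hMo hMc (hcM i)
          have hdiff : c (i + 1) - c i = (t (i + 1) - t i) • (w₀ - w) := by
            rw [hc]
            simp only
            module
          rw [hdiff, norm_smul, Real.norm_eq_abs, abs_of_nonneg (by linarith [hmono i])]
          calc (t (i + 1) - t i) * ‖w₀ - w‖
              ≤ ((1 - t i) * delta M w + t i * delta M w₀) / 2 :=
                hstep i (Finset.mem_range.1 hi)
            _ ≤ delta M (c i) / 2 := by linarith [hdel i]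
      _ = m * poincare (1 / 2) := by
          rw [Finset.sum_const, Finset.card_range, nsmul_eq_mul]
  have hmem : (∑ i ∈ Finset.range m, lempert M (c i) (c (i + 1))) ∈
      {r : ℝ | ∃ m' : ℕ, ∃ c' : ℕ → E, c' 0 = w ∧ c' m' = w₀ ∧ (∀ i, i ≤ m' → c' i ∈ M) ∧
        r = ∑ i ∈ Finset.range m', lempert M (c' i) (c' (i + 1))} := by
    refine ⟨m, c, ?_, ?_, fun i _ => hcM i, rfl⟩
    · rw [hc]; simp [h0]
    · rw [hc]; simp [hm]
  exact le_trans (csInf_le (kobDist_bddBelow M w w₀) hmem) hsum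


section DirDist

variable {M : Set E} {z v : E}

lemma dirDist_eq (hv : ‖v‖ = 1) :
    dirDist M z v = sSup {r : ℝ | 0 < r ∧ ∀ ζ : ℂ, ‖ζ‖ < r → z + ζ • v ∈ M} := by
  rw [dirDist, hv]
  norm_num

lemma dirDist_setBddAbove (hMb : Bornology.IsBounded M) (hv : ‖v‖ = 1) :
    BddAbove {r : ℝ | 0 < r ∧ ∀ ζ : ℂ, ‖ζ‖ < r → z + ζ • v ∈ M} := by
  obtain ⟨R, hR⟩ := hMb.subset_closedBall z
  refine ⟨|R| + 1, ?_⟩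
  rintro r ⟨hr, hmem⟩
  by_contra hgt
  push_neg at hgt
  have hζ : ‖((|R| + 1 : ℝ) : ℂ)‖ < r := by
    rw [Complex.norm_real, Real.norm_eq_abs, abs_of_pos (by positivity)]
    exact hgt
  have := hR (hmem _ hζ)
  rw [mem_closedBall, dist_eq_norm] at this
  have heq : z + ((|R| + 1 : ℝ) : ℂ) • v - z = ((|R| + 1 : ℝ) : ℂ) • v := by abel
  rw [heq, norm_smul, hv, mul_one, Complex.norm_real, Real.norm_eq_abs,
    abs_of_pos (by positivity)] at this
  have : |R| + 1 ≤ |R| := le_trans this (le_abs_self R)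
  linarith

lemma delta_le_dirDist (hMb : Bornology.IsBounded M) (hMo : IsOpen M) (hMc : Mᶜ.Nonempty)
    (hz : z ∈ M) (hv : ‖v‖ = 1) : delta M z ≤ dirDist M z v := by
  rw [dirDist_eq hv]
  apply le_csSup (dirDist_setBddAbove hMb hv)
  refine ⟨delta_pos hMo hMc hz, fun ζ hζ => ?_⟩
  apply ball_delta_subset M z
  rw [mem_ball, dist_eq_norm]
  have heq : z + ζ • v - z = ζ • v := by abel
  rw [heq, norm_smul, hv, mul_one]
  exact hζ

lemma exists_outside (hMb : Bornology.IsBounded M) (hv : ‖v‖ = 1) {ε : ℝ} (hε : 0 < ε) :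
    ∃ ζ : ℂ, ‖ζ‖ < dirDist M z v + ε ∧ z + ζ • v ∉ M := by
  by_contra h
  push_neg at h
  have hmem : dirDist M z v + ε ∈ {r : ℝ | 0 < r ∧ ∀ ζ : ℂ, ‖ζ‖ < r →
      z + ζ • v ∈ M} := by
    constructor
    · have : (0 : ℝ) ≤ dirDist M z v := by
        rw [dirDist_eq hv]
        apply Real.sSup_nonneg
        rintro x ⟨hx, -⟩
        exact hx.le
      linarith
    · exact h
  have := le_csSup (dirDist_setBddAbove hMb hv) hmem
  rw [← dirDist_eq hv] at this
  linarith

end DirDist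

/-- Schwarz-type bound for holomorphic discs into a half-plane. -/
lemma deriv_bound_of_halfplane {f : ℂ → E} (hf : DifferentiableOn ℂ f (ball (0 : ℂ) 1))
    (g : E →L[ℂ] ℂ) (c : ℝ) (hmaps : ∀ ζ ∈ ball (0 : ℂ) 1, (g (f ζ)).re < c) :
    ‖g (deriv f 0)‖ ≤ 2 * (c - (g (f 0)).re) := by
  set a : ℂ := g (f 0) with ha
  have hac : a.re < c := hmaps 0 (mem_ball_self one_pos)
  set b : ℂ := (2 * c : ℝ) - (starRingEnd ℂ) a with hb
  have hbre : b.re = 2 * c - a.re := by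
    simp [hb, Complex.sub_re, Complex.ofReal_re, Complex.conj_re]
  have hbim : b.im = a.im := by
    simp [hb, Complex.sub_im, Complex.ofReal_im, Complex.conj_im]
  have hb_ne : ∀ ξ : ℂ, ξ.re < c → ξ - b ≠ 0 := by
    intro ξ hξ h0
    rw [sub_eq_zero] at h0
    rw [h0, hbre] at hξ
    linarith
  have habs : ∀ ξ : ℂ, ξ.re < c → ‖(ξ - a) / (ξ - b)‖ < 1 := by
    intro ξ hξ
    have hsq : ‖ξ - a‖ ^ 2 < ‖ξ - b‖ ^ 2 := by
      rw [Complex.sq_norm, Complex.sq_norm, Complex.normSq_apply, Complex.normSq_apply]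
      simp only [Complex.sub_re, Complex.sub_im, hbre, hbim]
      nlinarith [hξ, hac]
    have hlt : ‖ξ - a‖ < ‖ξ - b‖ := by
      nlinarith [norm_nonneg (ξ - a), norm_nonneg (ξ - b)]
    rw [norm_div, div_lt_one (lt_of_le_of_lt (norm_nonneg _) hlt)]
    exact hlt
  set N : ℂ → ℂ := fun ζ => g (f ζ) with hN
  set h : ℂ → ℂ := fun ζ => (N ζ - a) / (N ζ - b) with hh
  have hNre : ∀ ζ ∈ ball (0 : ℂ) 1, (N ζ).re < c := hmaps
  have hNd : DifferentiableOn ℂ N (ball (0 : ℂ) 1) :=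
    g.differentiable.comp_differentiableOn hf
  have hdh : DifferentiableOn ℂ h (ball (0 : ℂ) 1) := by
    apply DifferentiableOn.div (hNd.sub_const a) (hNd.sub_const b)
    intro ζ hζ
    exact hb_ne _ (hNre ζ hζ)
  have hh0 : h 0 = 0 := by
    have : N 0 = a := rfl
    rw [hh]
    simp only [this, sub_self, zero_div]
  have hmapsh : MapsTo h (ball (0 : ℂ) 1) (ball (h 0) 1) := by
    intro ζ hζ
    rw [hh0, mem_ball, dist_zero_right]
    exact habs _ (hNre ζ hζ)
  have hschwarz : ‖deriv h 0‖ ≤ 1 / 1 :=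
    Complex.norm_deriv_le_div_of_mapsTo_ball hdh (hmapsh.mono_right ball_subset_closedBall) one_pos
  -- compute deriv h 0
  have hfd : DifferentiableAt ℂ f 0 :=
    hf.differentiableAt (Metric.isOpen_ball.mem_nhds (mem_ball_self one_pos))
  set u : E := deriv f 0 with hu
  have hNder : HasDerivAt N (g u) 0 :=
    g.hasFDerivAt.comp_hasDerivAt 0 hfd.hasDerivAt
  have hab_ne : a - b ≠ 0 := hb_ne a hac
  have hder : HasDerivAt h ((g u * (N 0 - b) - (N 0 - a) * g u) / (N 0 - b) ^ 2) 0 :=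
    (hNder.sub_const a).div (hNder.sub_const b) (by exact hb_ne a hac)
  have hN0 : N 0 = a := rfl
  have hval : (g u * (N 0 - b) - (N 0 - a) * g u) / (N 0 - b) ^ 2 = g u / (a - b) := by
    rw [hN0]
    field_simp
    ring
  have hderiv_eq : deriv h 0 = g u / (a - b) := by
    rw [hder.deriv, hval]
  have habs_ab : ‖a - b‖ = 2 * (c - a.re) := by
    have : a - b = ((2 * a.re - 2 * c : ℝ) : ℂ) := by
      apply Complex.ext
      · simp only [Complex.sub_re, hbre, Complex.ofReal_re]; ring
      · simp only [Complex.sub_im, hbim, Complex.ofReal_im]; ring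
    rw [this, Complex.norm_real, Real.norm_eq_abs, abs_of_neg (by linarith)]
    ring
  have : ‖g u‖ / (2 * (c - a.re)) ≤ 1 := by
    calc ‖g u‖ / (2 * (c - a.re)) = ‖g u / (a - b)‖ := by
          rw [norm_div, habs_ab]
      _ = ‖deriv h 0‖ := by rw [hderiv_eq]
      _ ≤ 1 := by linarith [hschwarz]
  rw [div_le_one (by linarith)] at this
  linarith [this]


lemma kobMetric_nonneg (D : Set E) (z v : E) : 0 ≤ kobMetric D z v := by
  apply Real.sInf_nonneg
  rintro r ⟨α, rfl, -⟩
  exact norm_nonneg α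

lemma kobMetric_inv_le_two_mul_dirDist {M : Set E} (hMo : IsOpen M) (hconv : Convex ℝ M)
    (hMb : Bornology.IsBounded M) (hMc : Mᶜ.Nonempty)
    {w : E} (hw : w ∈ M) {v : E} (hv : ‖v‖ = 1) :
    (kobMetric M w v)⁻¹ ≤ 2 * dirDist M w v := by
  set dd := dirDist M w v with hdd_def
  have hdd : 0 < dd :=
    lt_of_lt_of_le (delta_pos hMo hMc hw) (delta_le_dirDist hMb hMo hMc hw hv)
  have key : ∀ r ∈ {r : ℝ | ∃ α : ℂ, r = ‖α‖ ∧ ∃ f : ℂ → E,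
      DifferentiableOn ℂ f (ball (0 : ℂ) 1) ∧ MapsTo f (ball (0 : ℂ) 1) M ∧
      f 0 = w ∧ α • deriv f 0 = v}, (2 * dd)⁻¹ ≤ r := by
    rintro r ⟨α, rfl, f, hf, hmaps, hf0, hder⟩
    have hα : α ≠ 0 := by
      rintro rfl
      rw [zero_smul] at hder
      rw [← hder, norm_zero] at hv
      norm_num at hv
    have hαpos : 0 < ‖α‖ := norm_pos_iff.mpr hα
    have hinv : (‖α‖)⁻¹ ≤ 2 * dd := by
      by_contra hcon
      push_neg at hcon
      set ε := ((‖α‖)⁻¹ - 2 * dd) / 2 with hε_def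
      have hε : 0 < ε := by rw [hε_def]; linarith
      obtain ⟨ζ₀, hζ₀, hx₀⟩ := exists_outside (z := w) hMb hv hε
      obtain ⟨g, hg⟩ := RCLike.geometric_hahn_banach_open_point (𝕜 := ℂ) hconv hMo hx₀
      simp only [RCLike.re_to_complex] at hg
      set c := (g (w + ζ₀ • v)).re with hc_def
      have hbound := deriv_bound_of_halfplane hf g c
        (fun ζ hζ => hg (f ζ) (hmaps hζ))
      rw [hf0] at hbound
      set u : E := deriv f 0 with hu_def
      have hgu : g u = α⁻¹ * g v := by
        have hu : u = α⁻¹ • v := by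
          rw [← hder, smul_smul, inv_mul_cancel₀ hα, one_smul]
        rw [hu, _root_.map_smul, smul_eq_mul]
      have habs : (‖α‖)⁻¹ * ‖g v‖ ≤ 2 * (c - (g w).re) := by
        calc (‖α‖)⁻¹ * ‖g v‖
            = ‖α⁻¹ * g v‖ := by rw [norm_mul, norm_inv]
          _ = ‖g u‖ := by rw [hgu]
          _ ≤ 2 * (c - (g w).re) := hbound
      have hcre : c - (g w).re = (ζ₀ * g v).re := by
        rw [hc_def, map_add, _root_.map_smul, smul_eq_mul, Complex.add_re]
        ring
      have hre_le : (ζ₀ * g v).re ≤ ‖ζ₀‖ * ‖g v‖ := by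
        calc (ζ₀ * g v).re ≤ ‖ζ₀ * g v‖ := Complex.re_le_norm _
          _ = ‖ζ₀‖ * ‖g v‖ := norm_mul _ _
      have hpos : 0 < c - (g w).re := by
        have := hg w hw
        rw [hc_def]
        linarith
      have hgv : 0 < ‖g v‖ := by
        rcases lt_or_eq_of_le (norm_nonneg (g v)) with h | h
        · exact h
        · exfalso
          rw [hcre] at hpos
          rw [← h, mul_zero] at hre_le
          linarith
      have hstrict : ‖ζ₀‖ * ‖g v‖ < (dd + ε) * ‖g v‖ :=
        mul_lt_mul_of_pos_right hζ₀ hgv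
      have hfin : (‖α‖)⁻¹ * ‖g v‖ <
          (2 * (dd + ε)) * ‖g v‖ := by
        calc (‖α‖)⁻¹ * ‖g v‖ ≤ 2 * (c - (g w).re) := habs
          _ = 2 * (ζ₀ * g v).re := by rw [hcre]
          _ ≤ 2 * (‖ζ₀‖ * ‖g v‖) := by linarith [hre_le]
          _ < (2 * (dd + ε)) * ‖g v‖ := by linarith [hstrict]
      have hmain : (‖α‖)⁻¹ < 2 * (dd + ε) :=
        lt_of_mul_lt_mul_right hfin (norm_nonneg _)
      rw [hε_def] at hmain
      linarith
    calc (2 * dd)⁻¹ ≤ ((‖α‖)⁻¹)⁻¹ :=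
          inv_anti₀ (by positivity) hinv
      _ = ‖α‖ := inv_inv _
  rcases Set.eq_empty_or_nonempty {r : ℝ | ∃ α : ℂ, r = ‖α‖ ∧ ∃ f : ℂ → E,
      DifferentiableOn ℂ f (ball (0 : ℂ) 1) ∧ MapsTo f (ball (0 : ℂ) 1) M ∧
      f 0 = w ∧ α • deriv f 0 = v} with hS | hS
  · rw [kobMetric, hS, Real.sInf_empty, inv_zero]
    positivity
  · have h1 : (2 * dd)⁻¹ ≤ kobMetric M w v := le_csInf hS key
    calc (kobMetric M w v)⁻¹ ≤ ((2 * dd)⁻¹)⁻¹ := inv_anti₀ (by positivity) h1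
      _ = 2 * dd := inv_inv _

lemma kobMetric_inv_bound {M : Set E} (hMo : IsOpen M) (hconv : Convex ℝ M)
    (hMb : Bornology.IsBounded M) (hMc : Mᶜ.Nonempty)
    {w : E} (hw : w ∈ M) {v : E} (hv : ‖v‖ = 1) :
    (kobMetric M w v)⁻¹ ≤ 2 * dirDist M w v :=
  kobMetric_inv_le_two_mul_dirDist hMo hconv hMb hMc hw hv


lemma integrableOn_bound (K ν : ℝ) (hK : 0 ≤ K) (hν : 0 < ν) :
    IntegrableOn (fun r => K / (r * (-Real.log r) ^ (1 + ν))) (Ioo (0 : ℝ) (1 / 2)) := by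
  set g' : ℝ → ℝ := fun r => K / (r * (-Real.log r) ^ (1 + ν)) with hg'
  set Φ : ℝ → ℝ := fun r => (K / ν) * (-Real.log r) ^ (-ν) with hΦ
  have hderiv : ∀ r ∈ Ioo (0 : ℝ) (1 / 2), HasDerivAt Φ (g' r) r := by
    intro r hr
    have hr0 : 0 < r := hr.1
    have hlogneg : Real.log r < 0 := Real.log_neg hr0 (by linarith [hr.2])
    set x : ℝ := -Real.log r with hx_def
    have hx : 0 < x := by rw [hx_def]; linarith
    have hlog : HasDerivAt (fun r : ℝ => -Real.log r) (-(1 / r)) r := by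
      rw [one_div]; exact (Real.hasDerivAt_log (ne_of_gt hr0)).neg
    have hpow : HasDerivAt (fun y : ℝ => y ^ (-ν)) (-ν * x ^ (-ν - 1)) x :=
      Real.hasDerivAt_rpow_const (Or.inl (ne_of_gt hx))
    have hcomp : HasDerivAt (fun r : ℝ => (-Real.log r) ^ (-ν))
        ((-ν * x ^ (-ν - 1)) * (-(1 / r))) r := HasDerivAt.comp (h₂ := fun y : ℝ => y ^ (-ν)) r hpow hlog
    have hfull : HasDerivAt Φ (K / ν * (-ν * x ^ (-ν - 1) * -(1 / r))) r := hcomp.const_mul (K / ν)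
    convert hfull using 1
    have hxpow : x ^ (-ν - 1) = (x ^ (1 + ν))⁻¹ := by
      rw [← Real.rpow_neg hx.le]
      ring_nf
    have hν' : ν ≠ 0 := ne_of_gt hν
    have hr' : r ≠ 0 := ne_of_gt hr0
    have hxp : x ^ (1 + ν) ≠ 0 := ne_of_gt (Real.rpow_pos_of_pos hx _)
    rw [hg']
    simp only
    rw [hxpow]
    field_simp
    rw [← hx_def, mul_div_assoc, div_self hxp, mul_one]
  have hpos : ∀ r ∈ Ioo (0 : ℝ) (1 / 2), 0 ≤ g' r := by
    intro r hr
    have hlogneg : Real.log r < 0 := Real.log_neg hr.1 (by linarith [hr.2])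
    have h1 : (0:ℝ) ≤ (-Real.log r) ^ (1 + ν) := Real.rpow_nonneg (by linarith) _
    exact div_nonneg hK (mul_nonneg hr.1.le h1)
  have hcont : ContinuousOn Φ (Icc (0 : ℝ) (1 / 2)) := by
    intro r hr
    rcases eq_or_lt_of_le hr.1 with h0 | h0
    · -- r = 0
      rw [← h0]
      have hΦ0 : Φ 0 = 0 := by
        rw [hΦ]
        simp only [Real.log_zero, neg_zero, Real.zero_rpow (by linarith : -ν ≠ 0), mul_zero]
      unfold ContinuousWithinAt
      rw [hΦ0]
      have hsplit : Icc (0 : ℝ) (1 / 2) = {0} ∪ Ioc 0 (1 / 2) := by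
        ext x
        simp only [mem_Icc, mem_union, mem_singleton_iff, mem_Ioc]
        constructor
        · rintro ⟨h1, h2⟩
          rcases eq_or_lt_of_le h1 with h | h
          · left; exact h.symm
          · right; exact ⟨h, h2⟩
        · rintro (rfl | ⟨h1, h2⟩)
          · norm_num
          · exact ⟨h1.le, h2⟩
      rw [hsplit, nhdsWithin_union]
      apply Filter.Tendsto.sup
      · rw [nhdsWithin_singleton]
        have : Tendsto Φ (pure (0 : ℝ)) (𝓝 (Φ 0)) := tendsto_pure_nhds Φ 0
        rwa [hΦ0] at this
      · have h1 : Tendsto (fun r : ℝ => -Real.log r) (𝓝[>] (0 : ℝ)) atTop :=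
          tendsto_neg_atBot_atTop.comp Real.tendsto_log_nhdsGT_zero
        have h2 : Tendsto (fun r : ℝ => (-Real.log r) ^ (-ν)) (𝓝[>] (0 : ℝ)) (𝓝 0) :=
          (tendsto_rpow_neg_atTop hν).comp h1
        have h3 : Tendsto Φ (𝓝[>] (0 : ℝ)) (𝓝 ((K / ν) * 0)) := h2.const_mul (K / ν)
        rw [mul_zero] at h3
        exact h3.mono_left (nhdsWithin_mono _ Ioc_subset_Ioi_self)
    · -- r > 0
      apply ContinuousAt.continuousWithinAt
      have hlogneg : Real.log r < 0 := Real.log_neg h0 (by linarith [hr.2])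
      have hx : (0:ℝ) < -Real.log r := by linarith
      have hinner : ContinuousAt (fun r : ℝ => -Real.log r) r :=
        (Real.continuousAt_log (ne_of_gt h0)).neg
      exact continuousAt_const.mul (hinner.rpow_const (Or.inl (ne_of_gt hx)))
  have := intervalIntegral.integrableOn_deriv_of_nonneg hcont hderiv hpos
  exact this.mono_set Ioo_subset_Ioc_self


/-- Case A chain: when `delta M w` is comparable to `delta M w₀`. -/
lemma kobDist_bound_caseA {M : Set E} (hconv : Convex ℝ M) (hMo : IsOpen M) (hMc : Mᶜ.Nonempty)
    {w w₀ : E} (hw : w ∈ M) (hw₀ : w₀ ∈ M) (hne : w ≠ w₀)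
    (hcase : delta M w₀ / 2 ≤ delta M w) :
    kobDist M w w₀ ≤ (⌈4 * ‖w₀ - w‖ / delta M w₀⌉₊ : ℝ) * poincare (1/2) := by
  set d : ℝ := delta M w with hd_def
  set D : ℝ := delta M w₀ with hD_def
  set L : ℝ := ‖w₀ - w‖ with hL_def
  have hd : 0 < d := delta_pos hMo hMc hw
  have hD : 0 < D := delta_pos hMo hMc hw₀
  have hL : 0 < L := by
    rw [hL_def, norm_pos_iff, sub_ne_zero]
    exact fun h => hne h.symm
  set q : ℝ := D / (4 * L) with hq_def
  have hq : 0 < q := by positivity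
  set t : ℕ → ℝ := fun i => min 1 ((i:ℝ) * q) with ht_def
  set m : ℕ := ⌈4 * L / D⌉₊ with hm_def
  have hmge : 4 * L / D ≤ (m:ℝ) := Nat.le_ceil _
  have ht0 : t 0 = 0 := by simp [ht_def]
  have htm : t m = 1 := by
    rw [ht_def]
    simp only
    apply min_eq_left
    have h1 : (1:ℝ) = (4 * L / D) * q := by rw [hq_def]; field_simp
    rw [h1]
    exact mul_le_mul_of_nonneg_right hmge hq.le
  have hrange : ∀ i, 0 ≤ t i ∧ t i ≤ 1 := by
    intro i
    exact ⟨le_min (by norm_num) (by positivity), min_le_left _ _⟩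
  have hmono : ∀ i, t i ≤ t (i + 1) := by
    intro i
    apply min_le_min le_rfl
    have h2 : (i:ℝ) ≤ ((i+1:ℕ):ℝ) := by push_cast; linarith
    exact mul_le_mul_of_nonneg_right h2 hq.le
  have hstep : ∀ i, i < m → (t (i+1) - t i) * ‖w₀ - w‖ ≤
      ((1 - t i) * d + t i * D) / 2 := by
    intro i _
    have h1 : t (i+1) ≤ t i + q := by
      rw [ht_def]
      simp only
      calc min 1 (((i+1:ℕ):ℝ) * q) ≤ min (1 + q) ((i:ℝ) * q + q) := by
            apply min_le_min (by linarith)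
            push_cast
            linarith
        _ = min 1 ((i:ℝ) * q) + q := min_add_add_right _ _ _
    have ht0' : 0 ≤ t i := (hrange i).1
    have ht1' : t i ≤ 1 := (hrange i).2
    have hrhs : D / 4 ≤ ((1 - t i) * d + t i * D) / 2 := by nlinarith
    have hqL : q * L = D / 4 := by
      rw [hq_def]
      field_simp
    have hlhs : (t (i+1) - t i) * ‖w₀ - w‖ ≤ q * L := by
      rw [← hL_def]
      exact mul_le_mul_of_nonneg_right (by linarith) hL.le
    linarith
  exact kobDist_le_of_chain hconv hMo hMc hw hw₀ t m ht0 htm hrange hmono hstep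

/-- Case B chain: when `delta M w` is small compared to `delta M w₀`. -/
lemma kobDist_bound_caseB {M : Set E} (hconv : Convex ℝ M) (hMo : IsOpen M) (hMc : Mᶜ.Nonempty)
    {w w₀ : E} (hw : w ∈ M) (hw₀ : w₀ ∈ M) (hne : w ≠ w₀)
    (hcase : delta M w < delta M w₀ / 2) :
    kobDist M w w₀ ≤
      (⌈Real.log (delta M w₀ / delta M w) /
        Real.log (1 + delta M w₀ / (4 * ‖w₀ - w‖))⌉₊ : ℝ) * poincare (1/2) := by
  set d : ℝ := delta M w with hd_def
  set D : ℝ := delta M w₀ with hD_def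
  set L : ℝ := ‖w₀ - w‖ with hL_def
  have hd : 0 < d := delta_pos hMo hMc hw
  have hD : 0 < D := delta_pos hMo hMc hw₀
  have hL : 0 < L := by
    rw [hL_def, norm_pos_iff, sub_ne_zero]
    exact fun h => hne h.symm
  set a : ℝ := 2 * d / D with ha_def
  have ha0 : 0 < a := by positivity
  have ha1 : a < 1 := by
    rw [ha_def, div_lt_one hD]
    linarith
  set ρ : ℝ := D / (4 * L) with hρ_def
  have hρ : 0 < ρ := by positivity
  have hbase : (1:ℝ) ≤ 1 + ρ := by linarith
  have honele : ∀ i : ℕ, (1:ℝ) ≤ (1+ρ)^i := fun i => one_le_pow₀ hbase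
  have hargmono : ∀ i : ℕ, a * ((1+ρ)^i - 1) ≤ a * ((1+ρ)^(i+1) - 1) := by
    intro i
    have h1 : (1+ρ)^i ≤ (1+ρ)^(i+1) := pow_le_pow_right₀ hbase (Nat.le_succ i)
    nlinarith
  set t : ℕ → ℝ := fun i => min 1 (a * ((1+ρ)^i - 1)) with ht_def
  set m : ℕ := ⌈Real.log (D / d) / Real.log (1+ρ)⌉₊ with hm_def
  have hDd : (2:ℝ) < D / d := by
    rw [lt_div_iff₀ hd]
    linarith
  have hlogDd : 0 < Real.log (D / d) := Real.log_pos (by linarith)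
  have hlog1ρ : 0 < Real.log (1+ρ) := Real.log_pos (by linarith)
  have hpowm : D / d ≤ (1+ρ)^m := by
    have h1 : Real.log (D/d) / Real.log (1+ρ) ≤ (m:ℝ) := Nat.le_ceil _
    have h2 : Real.log (D/d) ≤ (m:ℝ) * Real.log (1+ρ) := by
      rw [div_le_iff₀ hlog1ρ] at h1
      linarith
    have h3 : Real.log (D/d) ≤ Real.log ((1+ρ)^m) := by
      rw [Real.log_pow]
      exact h2
    exact (Real.log_le_log_iff (by positivity) (by positivity)).1 h3
  have ht0 : t 0 = 0 := by simp [ht_def]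
  have htm : t m = 1 := by
    rw [ht_def]
    simp only
    apply min_eq_left
    have h4 : a * (D/d - 1) ≤ a * ((1+ρ)^m - 1) := by nlinarith
    have h5 : a * (D/d - 1) = 2 - a := by
      rw [ha_def]
      field_simp
    linarith
  have hrange : ∀ i, 0 ≤ t i ∧ t i ≤ 1 := by
    intro i
    refine ⟨le_min (by norm_num) ?_, min_le_left _ _⟩
    have := honele i
    nlinarith
  have hmono : ∀ i, t i ≤ t (i + 1) := fun i => min_le_min le_rfl (hargmono i)
  have hρL : ρ * L = D / 4 := by
    rw [hρ_def]
    field_simp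
  have hstep : ∀ i, i < m → (t (i+1) - t i) * ‖w₀ - w‖ ≤
      ((1 - t i) * d + t i * D) / 2 := by
    intro i _
    rw [← hL_def]
    rcases le_or_gt 1 (a * ((1+ρ)^i - 1)) with hcap | hcap
    · have hti : t i = 1 := min_eq_left hcap
      have hti1 : t (i+1) = 1 := min_eq_left (le_trans hcap (hargmono i))
      rw [hti, hti1]
      norm_num
      linarith
    · have hti : t i = a * ((1+ρ)^i - 1) := min_eq_right hcap.le
      have h6 : t (i+1) ≤ a * ((1+ρ)^(i+1) - 1) := min_le_right _ _
      have hstepval : a * ((1+ρ)^(i+1) - 1) - a * ((1+ρ)^i - 1) =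
          ρ * (a * ((1+ρ)^i - 1) + a) := by
        rw [pow_succ]
        ring
      have hτ0 : 0 ≤ t i := (hrange i).1
      have h7 : (t (i+1) - t i) * L ≤ ρ * (t i + a) * L := by
        apply mul_le_mul_of_nonneg_right _ hL.le
        rw [hti]
        linarith [hstepval, h6]
      have h8 : ρ * (t i + a) * L = (D/4) * (t i) + d / 2 := by
        have h8a : ρ * (t i + a) * L = (ρ * L) * (t i + a) := by ring
        rw [h8a, hρL, ha_def]
        field_simp
        ring
      have h9 : (D/4) * (t i) + d / 2 ≤ ((1 - t i) * d + t i * D) / 2 := by nlinarith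
      linarith
  exact kobDist_le_of_chain hconv hMo hMc hw hw₀ t m ht0 htm hrange hmono hstep

end AuxLemmas

set_option maxHeartbeats 2000000 in
/-- Step 1 in Proposition 5.4 of the paper. A local log-type convex
piece is a Goldilocks domain (Bharali–Zimmer). -/
theorem logTypeConvex_goldilocks {n : ℕ} (hn : 2 ≤ n) (Ω : Set (Cn n))
    (hΩo : IsOpen Ω) (hΩc : IsConnected Ω) (hΩb : Bornology.IsBounded Ω)
    (q : Cn n) (hq : q ∈ frontier Ω)
    (𝒪 : Set (Cn n)) (h𝒪o : IsOpen 𝒪) (hq𝒪 : q ∈ 𝒪)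
    (hltc : LogTypeConvex (𝒪 ∩ Ω)) :
    (∃ ε : ℝ, 0 < ε ∧ (∀ r ∈ Ioo (0 : ℝ) ε, BddAbove (goldiSet (𝒪 ∩ Ω) r)) ∧
      IntegrableOn (fun r => sSup (goldiSet (𝒪 ∩ Ω) r) / r) (Ioo 0 ε)) ∧
    ∀ w₀ ∈ 𝒪 ∩ Ω, ∃ α : ℝ, 0 < α ∧ ∃ β : ℝ, 0 < β ∧
      ∀ w ∈ 𝒪 ∩ Ω,
        kobDist (𝒪 ∩ Ω) w w₀ ≤ α + β * Real.log (1 / delta (𝒪 ∩ Ω) w) := by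
  set M : Set (Cn n) := 𝒪 ∩ Ω with hM_def
  obtain ⟨hMb, hconv, hMne, C, hC, ν, hν, hlog⟩ := hltc
  have hMo : IsOpen M := h𝒪o.inter hΩo
  have hMc : Mᶜ.Nonempty := by
    rcases Set.eq_empty_or_nonempty Mᶜ with h | h
    · exfalso
      rw [Set.compl_empty_iff] at h
      have hnt : Nontrivial (Cn n) := by
        have h1 : (1 : ℕ) ≤ n := le_trans (by norm_num) hn
        have : Nonempty (Fin n) := ⟨⟨0, by omega⟩⟩
        infer_instance
      exact NormedSpace.unbounded_univ ℝ (Cn n) (h ▸ hMb)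
    · exact h
  have helem : ∀ r ∈ Ioo (0:ℝ) (1/2), ∀ t ∈ goldiSet M r,
      t ≤ 2 * (C / |Real.log r| ^ (1 + ν)) := by
    rintro r hr t ⟨w, hw, v, hδ, hv, rfl⟩
    have hd : 0 < delta M w := delta_pos hMo hMc hw
    have h1 : (kobMetric M w v)⁻¹ ≤ 2 * dirDist M w v :=
      kobMetric_inv_bound hMo hconv hMb hMc hw hv
    have hvne : v ≠ 0 := by
      intro h0; rw [h0, norm_zero] at hv; norm_num at hv
    have h2 : dirDist M w v ≤ C / |Real.log (delta M w)| ^ (1 + ν) := hlog w hw v hvne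
    have hr1 : r < 1 := by linarith [hr.2]
    have hlogr : Real.log r < 0 := Real.log_neg hr.1 hr1
    have hlogd : Real.log (delta M w) ≤ Real.log r := Real.log_le_log hd hδ
    have habs : |Real.log r| ≤ |Real.log (delta M w)| := by
      rw [abs_of_neg hlogr, abs_of_neg (by linarith : Real.log (delta M w) < 0)]
      linarith
    have hpowpos : (0:ℝ) < |Real.log r| ^ (1 + ν) :=
      Real.rpow_pos_of_pos (abs_pos.2 (ne_of_lt hlogr)) _
    have hpowle : |Real.log r| ^ (1 + ν) ≤ |Real.log (delta M w)| ^ (1 + ν) :=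
      Real.rpow_le_rpow (abs_nonneg _) habs (by linarith)
    have h3 : C / |Real.log (delta M w)| ^ (1 + ν) ≤ C / |Real.log r| ^ (1 + ν) :=
      div_le_div_of_nonneg_left hC.le hpowpos hpowle
    linarith
  have hbdd : ∀ r ∈ Ioo (0:ℝ) (1/2), BddAbove (goldiSet M r) := by
    intro r hr
    exact ⟨2 * (C / |Real.log r| ^ (1 + ν)), fun t ht => helem r hr t ht⟩
  have hnonneg : ∀ r : ℝ, 0 ≤ sSup (goldiSet M r) := by
    intro r
    apply Real.sSup_nonneg
    rintro t ⟨w, hw, v, hδ, hv, rfl⟩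
    exact inv_nonneg.2 (kobMetric_nonneg M w v)
  constructor
  · -- Part 1: integrability
    refine ⟨1 / 2, by norm_num, hbdd, ?_⟩
    have hmono : MonotoneOn (fun r => sSup (goldiSet M r)) (Ioo (0:ℝ) (1/2)) := by
      intro r hr r' hr' hle
      rcases Set.eq_empty_or_nonempty (goldiSet M r) with h | h
      · simp only [h, Real.sSup_empty]
        exact hnonneg r'
      · apply csSup_le_csSup (hbdd r' hr') h
        rintro t ⟨w, hw, v, hδ, hv, rfl⟩
        exact ⟨w, hw, v, le_trans hδ hle, hv, rfl⟩
    have hmeas : AEMeasurable (fun r => sSup (goldiSet M r))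
        (volume.restrict (Ioo (0:ℝ) (1/2))) :=
      aemeasurable_restrict_of_monotoneOn measurableSet_Ioo hmono
    have hmeas2 : AEMeasurable (fun r => sSup (goldiSet M r) / r)
        (volume.restrict (Ioo (0:ℝ) (1/2))) :=
      hmeas.div aemeasurable_id
    have hint : IntegrableOn (fun r => (2 * C) / (r * (-Real.log r) ^ (1 + ν)))
        (Ioo (0:ℝ) (1/2)) := integrableOn_bound (2 * C) ν (by positivity) hν
    apply MeasureTheory.Integrable.mono' hint hmeas2.aestronglyMeasurable
    rw [ae_restrict_iff' measurableSet_Ioo]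
    apply Filter.Eventually.of_forall
    intro r hr
    have hr1 : r < 1 := by linarith [hr.2]
    have hlogr : Real.log r < 0 := Real.log_neg hr.1 hr1
    have habs : |Real.log r| = -Real.log r := abs_of_neg hlogr
    have hFle : sSup (goldiSet M r) ≤ 2 * (C / |Real.log r| ^ (1 + ν)) := by
      apply Real.sSup_le (fun t ht => helem r hr t ht)
      have hh : (0:ℝ) < |Real.log r| ^ (1 + ν) :=
        Real.rpow_pos_of_pos (abs_pos.2 (ne_of_lt hlogr)) _
      positivity
    have hpow : (0:ℝ) < (-Real.log r) ^ (1 + ν) := Real.rpow_pos_of_pos (by linarith) _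
    rw [Real.norm_eq_abs, abs_of_nonneg (div_nonneg (hnonneg r) hr.1.le)]
    rw [div_le_div_iff₀ hr.1 (mul_pos hr.1 hpow)]
    calc sSup (goldiSet M r) * (r * (-Real.log r) ^ (1 + ν))
        ≤ (2 * (C / |Real.log r| ^ (1 + ν))) * (r * (-Real.log r) ^ (1 + ν)) := by
          exact mul_le_mul_of_nonneg_right hFle (mul_pos hr.1 hpow).le
      _ = 2 * C * r := by
          rw [habs]
          field_simp
  · -- Part 2: upper bound on Kobayashi distance
    intro w₀ hw₀
    have hD : 0 < delta M w₀ := delta_pos hMo hMc hw₀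
    have hκ : 0 < poincare (1/2) := poincare_half_pos
    obtain ⟨R0, hR0⟩ := hMb.subset_closedBall w₀
    set R : ℝ := max R0 1 with hR_def
    have hR1 : (1:ℝ) ≤ R := le_max_right _ _
    have hRpos : 0 < R := by linarith
    have hLR : ∀ x ∈ M, ‖x - w₀‖ ≤ R := by
      intro x hx
      have h1 := hR0 hx
      rw [mem_closedBall, dist_eq_norm] at h1
      exact le_trans h1 (le_max_left _ _)
    have hMc' := hMc
    obtain ⟨xc, hxc⟩ := hMc'
    have hΔpos : 0 < dist w₀ xc + R := by
      have h0 := dist_nonneg (x := w₀) (y := xc)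
      linarith
    have hdle : ∀ w' ∈ M, delta M w' ≤ dist w₀ xc + R := by
      intro w' hw'
      calc delta M w' ≤ dist w' xc := delta_le_dist hxc w'
        _ ≤ dist w' w₀ + dist w₀ xc := dist_triangle _ _ _
        _ ≤ R + dist w₀ xc := by
            have h2 := hLR w' hw'
            rw [dist_eq_norm]
            linarith
        _ = dist w₀ xc + R := by ring
    have hρ₀ : 0 < delta M w₀ / (4 * R) := div_pos hD (by linarith)
    set c₀ : ℝ := Real.log (1 + delta M w₀ / (4 * R)) with hc₀_def
    have hc₀ : 0 < c₀ := Real.log_pos (by linarith)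
    set β : ℝ := poincare (1/2) / c₀ with hβ_def
    have hβ : 0 < β := div_pos hκ hc₀
    have hRD : 0 ≤ 4 * R / delta M w₀ := div_nonneg (by linarith) hD.le
    set α : ℝ := (4 * R / delta M w₀ + 2) * poincare (1/2) + poincare (1/2)
      + β * |Real.log (delta M w₀)| + β * |Real.log (dist w₀ xc + R)| + 1 with hα_def
    have hαaux1 : 0 ≤ β * |Real.log (delta M w₀)| := mul_nonneg hβ.le (abs_nonneg _)
    have hαaux2 : 0 ≤ β * |Real.log (dist w₀ xc + R)| := mul_nonneg hβ.le (abs_nonneg _)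
    have hαaux3 : 0 ≤ (4 * R / delta M w₀ + 2) * poincare (1/2) :=
      mul_nonneg (by linarith) hκ.le
    have hα : 0 < α := by
      rw [hα_def]
      linarith [hκ, hαaux1, hαaux2, hαaux3]
    refine ⟨α, hα, β, hβ, ?_⟩
    intro w hw
    have hd : 0 < delta M w := delta_pos hMo hMc hw
    have hdΔ : delta M w ≤ dist w₀ xc + R := hdle w hw
    have hlog1d : Real.log (1 / delta M w) = -Real.log (delta M w) := by
      rw [one_div, Real.log_inv]
    have hslack : -(β * |Real.log (dist w₀ xc + R)|) ≤ β * Real.log (1 / delta M w) := by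
      rw [hlog1d]
      have h1 : Real.log (delta M w) ≤ Real.log (dist w₀ xc + R) := Real.log_le_log hd hdΔ
      have h2 : Real.log (dist w₀ xc + R) ≤ |Real.log (dist w₀ xc + R)| := le_abs_self _
      have h3 : β * Real.log (delta M w) ≤ β * |Real.log (dist w₀ xc + R)| :=
        mul_le_mul_of_nonneg_left (le_trans h1 h2) hβ.le
      have h4 : β * -Real.log (delta M w) = -(β * Real.log (delta M w)) := by ring
      rw [h4]
      linarith
    rcases eq_or_ne w w₀ with rfl | hne
    · have h0 : kobDist M w w ≤ 0 := by
        have hmem : (0:ℝ) ∈ {r : ℝ | ∃ m : ℕ, ∃ c : ℕ → Cn n, c 0 = w ∧ c m = w ∧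
            (∀ i, i ≤ m → c i ∈ M) ∧
            r = ∑ i ∈ Finset.range m, lempert M (c i) (c (i + 1))} :=
          ⟨0, fun _ => w, rfl, rfl, fun i _ => hw, by simp⟩
        exact csInf_le (kobDist_bddBelow M w w) hmem
      have hfin : 0 ≤ α + β * Real.log (1 / delta M w) := by
        rw [hα_def]
        linarith [hslack, hαaux1, hαaux3, hκ]
      linarith
    · have hL : 0 < ‖w₀ - w‖ := by
        rw [norm_pos_iff, sub_ne_zero]
        exact fun h => hne h.symm
      have hLR' : ‖w₀ - w‖ ≤ R := by
        rw [norm_sub_rev]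
        exact hLR w hw
      rcases le_or_gt (delta M w₀ / 2) (delta M w) with hcase | hcase
      · -- Case A
        have hkob := kobDist_bound_caseA hconv hMo hMc hw hw₀ hne hcase
        have hceil : ((⌈4 * ‖w₀ - w‖ / delta M w₀⌉₊ : ℕ) : ℝ)
            ≤ 4 * R / delta M w₀ + 2 := by
          have h1 : 4 * ‖w₀ - w‖ / delta M w₀ ≤ 4 * R / delta M w₀ :=
            (div_le_div_iff_of_pos_right hD).2 (by linarith)
          have h2 : ((⌈4 * ‖w₀ - w‖ / delta M w₀⌉₊ : ℕ) : ℝ)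
              ≤ 4 * ‖w₀ - w‖ / delta M w₀ + 1 :=
            (Nat.ceil_lt_add_one (div_nonneg (by positivity) hD.le)).le
          linarith
        calc kobDist M w w₀
            ≤ ((⌈4 * ‖w₀ - w‖ / delta M w₀⌉₊ : ℕ) : ℝ) * poincare (1/2) := hkob
          _ ≤ (4 * R / delta M w₀ + 2) * poincare (1/2) :=
              mul_le_mul_of_nonneg_right hceil hκ.le
          _ ≤ α + β * Real.log (1 / delta M w) := by
              rw [hα_def]
              linarith [hslack, hαaux1, hκ]
      · -- Case B
        have hkob := kobDist_bound_caseB hconv hMo hMc hw hw₀ hne hcase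
        have hDd : (2:ℝ) < delta M w₀ / delta M w := by
          rw [lt_div_iff₀ hd]
          linarith
        have hlogDd : 0 < Real.log (delta M w₀ / delta M w) := Real.log_pos (by linarith)
        have hρge : delta M w₀ / (4 * R) ≤ delta M w₀ / (4 * ‖w₀ - w‖) :=
          div_le_div_of_nonneg_left hD.le (by linarith) (by linarith)
        have hlog1ρ : c₀ ≤ Real.log (1 + delta M w₀ / (4 * ‖w₀ - w‖)) := by
          rw [hc₀_def]
          exact Real.log_le_log (by linarith) (by linarith)
        have hlogρpos : 0 < Real.log (1 + delta M w₀ / (4 * ‖w₀ - w‖)) :=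
          lt_of_lt_of_le hc₀ hlog1ρ
        have hceil : ((⌈Real.log (delta M w₀ / delta M w) /
            Real.log (1 + delta M w₀ / (4 * ‖w₀ - w‖))⌉₊ : ℕ) : ℝ)
            ≤ Real.log (delta M w₀ / delta M w) / c₀ + 1 := by
          have h1 : Real.log (delta M w₀ / delta M w) /
              Real.log (1 + delta M w₀ / (4 * ‖w₀ - w‖))
              ≤ Real.log (delta M w₀ / delta M w) / c₀ :=
            div_le_div_of_nonneg_left hlogDd.le hc₀ hlog1ρ
          have h2 := (Nat.ceil_lt_add_one (a := Real.log (delta M w₀ / delta M w) /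
              Real.log (1 + delta M w₀ / (4 * ‖w₀ - w‖)))
            (div_nonneg hlogDd.le hlogρpos.le)).le
          linarith
        have hlogdiv : Real.log (delta M w₀ / delta M w)
            = Real.log (delta M w₀) - Real.log (delta M w) :=
          Real.log_div (ne_of_gt hD) (ne_of_gt hd)
        calc kobDist M w w₀
            ≤ ((⌈Real.log (delta M w₀ / delta M w) /
              Real.log (1 + delta M w₀ / (4 * ‖w₀ - w‖))⌉₊ : ℕ) : ℝ) * poincare (1/2) := hkob
          _ ≤ (Real.log (delta M w₀ / delta M w) / c₀ + 1) * poincare (1/2) :=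
              mul_le_mul_of_nonneg_right hceil hκ.le
          _ = poincare (1/2) + β * Real.log (delta M w₀ / delta M w) := by
              rw [hβ_def]
              field_simp
              ring
          _ ≤ poincare (1/2) + β * |Real.log (delta M w₀)| + β * Real.log (1 / delta M w) := by
              rw [hlogdiv, hlog1d]
              have h10 : Real.log (delta M w₀) ≤ |Real.log (delta M w₀)| := le_abs_self _
              have h11 : β * (Real.log (delta M w₀) - Real.log (delta M w))
                  ≤ β * |Real.log (delta M w₀)| + β * -Real.log (delta M w) := by
                have h12 : β * Real.log (delta M w₀) ≤ β * |Real.log (delta M w₀)| :=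
                  mul_le_mul_of_nonneg_left h10 hβ.le
                nlinarith [h12]
              linarith
          _ ≤ α + β * Real.log (1 / delta M w) := by
              rw [hα_def]
              linarith [hslack, hαaux2, hαaux3]

end Paper
end
end

section
/- Let Ω := {(z,w) ∈ ℂ² : |z| + |w| < 1}. There exists δ > 0 such that for every (z,w) ∈ B²((1,0),δ) ∩ Ω, δ_Ω(z,w) = (1 − |z| − |w|)/√2. -/
/-
Common definitions for formalizing results from
"Local continuous extension of proper holomorphic maps: low-regularity and
infinite-type boundaries" (A. Banik).
-/

open Metric Set Filter MeasureTheory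
open scoped Real ENNReal ComplexInnerProductSpace Topology

noncomputable section

namespace Paper

variable {E : Type*} [NormedAddCommGroup E] [InnerProductSpace ℂ E]

private lemma aux_push (c : ℂ) (t : ℝ) (ht : 0 ≤ t) :
    ∃ d : ℂ, ‖d‖ = ‖c‖ + t ∧ ‖d - c‖ = t := by
  rcases eq_or_ne c 0 with h | h
  · exact ⟨(t : ℂ), by simp [h, Complex.norm_of_nonneg ht, ht]⟩
  · have hc : (0:ℝ) < ‖c‖ := norm_pos_iff.mpr h
    refine ⟨((1 + t / ‖c‖ : ℝ) : ℂ) * c, ?_, ?_⟩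
    · rw [norm_mul, Complex.norm_real, Real.norm_eq_abs, abs_of_nonneg (by positivity)]
      field_simp
    · have : ((1 + t / ‖c‖ : ℝ) : ℂ) * c - c
          = ((t / ‖c‖ : ℝ) : ℂ) * c := by push_cast; ring
      rw [this, norm_mul, Complex.norm_real, Real.norm_eq_abs, abs_of_nonneg (by positivity)]
      field_simp

/-- Equation (2.4) of the paper. The boundary distance of
`Ω = {|z| + |w| < 1}` near the point `(1,0)`. -/
theorem example_boundary_distance :
    ∃ δ : ℝ, 0 < δ ∧
      ∀ p : Cn 2,
        p ∈ ball (EuclideanSpace.single (0 : Fin 2) (1 : ℂ)) δ →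
        ‖p 0‖ + ‖p 1‖ < 1 →
        delta {q : Cn 2 | ‖q 0‖ + ‖q 1‖ < 1} p =
          (1 - ‖p 0‖ - ‖p 1‖) / Real.sqrt 2 := by
  have h2 : (0:ℝ) < Real.sqrt 2 := by positivity
  refine ⟨1, one_pos, fun p _ hp => ?_⟩
  set a := ‖p 0‖ with ha
  set b := ‖p 1‖ with hb
  have ha0 : 0 ≤ a := norm_nonneg _
  have hb0 : 0 ≤ b := norm_nonneg _
  have hab : a + b < 1 := hp
  set t : ℝ := (1 - a - b) / 2 with htdef
  have ht : 0 ≤ t := by simp only [htdef]; linarith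
  unfold delta
  apply le_antisymm
  · obtain ⟨q0, hq0, hq0'⟩ := aux_push (p 0) t ht
    obtain ⟨q1, hq1, hq1'⟩ := aux_push (p 1) t ht
    set q : Cn 2 := (WithLp.equiv 2 (Fin 2 → ℂ)).symm ![q0, q1] with hq
    have hq0e : q 0 = q0 := rfl
    have hq1e : q 1 = q1 := rfl
    have hmem : q ∈ {q : Cn 2 | ‖q 0‖ + ‖q 1‖ < 1}ᶜ := by
      simp only [mem_compl_iff, mem_setOf_eq, not_lt, hq0e, hq1e, hq0, hq1]
      linarith
    have hd : dist p q = (1 - a - b) / Real.sqrt 2 := by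
      rw [EuclideanSpace.dist_eq, Fin.sum_univ_two]
      have e0 : dist (p 0) (q 0) = t := by
        rw [Complex.dist_eq, hq0e, ← norm_neg]; simpa using hq0'
      have e1 : dist (p 1) (q 1) = t := by
        rw [Complex.dist_eq, hq1e, ← norm_neg]; simpa using hq1'
      rw [e0, e1]
      have h22 : Real.sqrt 2 ^ 2 = 2 := Real.sq_sqrt (by norm_num)
      have : t^2 + t^2 = ((1 - a - b) / Real.sqrt 2)^2 := by
        rw [div_pow, div_pow, h22]; ring
      rw [this, Real.sqrt_sq (div_nonneg (by linarith) h2.le)]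
    calc infDist p {q : Cn 2 | ‖q 0‖ + ‖q 1‖ < 1}ᶜ
        ≤ dist p q := infDist_le_dist_of_mem hmem
      _ = _ := hd
  · have hne : ({q : Cn 2 | ‖q 0‖ + ‖q 1‖ < 1}ᶜ : Set (Cn 2)).Nonempty := by
      refine ⟨(WithLp.equiv 2 (Fin 2 → ℂ)).symm ![2, 0], ?_⟩
      simp only [mem_compl_iff, mem_setOf_eq, not_lt,
        show ((WithLp.equiv 2 (Fin 2 → ℂ)).symm ![(2:ℂ), 0]) 0 = 2 from rfl,
        show ((WithLp.equiv 2 (Fin 2 → ℂ)).symm ![(2:ℂ), 0]) 1 = 0 from rfl]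
      norm_num
    refine le_of_not_gt fun hlt => ?_
    obtain ⟨q, hq, hdq'⟩ := (infDist_lt_iff hne).mp hlt
    refine absurd hdq' (not_lt.mpr ?_)
    simp only [mem_compl_iff, mem_setOf_eq, not_lt] at hq
    set x := dist (p 0) (q 0) with hx
    set y := dist (p 1) (q 1) with hy
    have hx0 : 0 ≤ x := dist_nonneg
    have hy0 : 0 ≤ y := dist_nonneg
    have h1 : 1 - a - b ≤ x + y := by
      have e0 : ‖q 0‖ - a ≤ x := by
        rw [hx, dist_comm, Complex.dist_eq, ha]
        exact norm_sub_norm_le (q 0) (p 0)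
      have e1 : ‖q 1‖ - b ≤ y := by
        rw [hy, dist_comm, Complex.dist_eq, hb]
        exact norm_sub_norm_le (q 1) (p 1)
      linarith
    have hdq : dist p q = Real.sqrt (x^2 + y^2) := by
      rw [EuclideanSpace.dist_eq, Fin.sum_univ_two]
    rw [hdq]
    rw [div_le_iff₀ h2]
    have key : (1 - a - b) ≤ Real.sqrt (x^2 + y^2) * Real.sqrt 2 := by
      rw [← Real.sqrt_mul (by positivity)]
      have h1' : 0 ≤ 1 - a - b := by linarith
      have hsq : (1 - a - b)^2 ≤ (x^2 + y^2) * 2 := by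
        nlinarith [sq_nonneg (x - y)]
      calc 1 - a - b = Real.sqrt ((1 - a - b)^2) := (Real.sqrt_sq h1').symm
        _ ≤ _ := Real.sqrt_le_sqrt hsq
    exact key


end Paper
end
end

section
/- Let Ω := {(z,w) ∈ ℂ² : |z| + |w| < 1}. There exist δ > 0 and a constant c̃ > 0 such that k_Ω((z,w);v) ≥ ‖v‖ / (c̃ (δ_Ω(z,w))^{1/2}) for all (z,w) ∈ B²((1,0),δ) ∩ Ω and all v ∈ ℂ². -/
/-
Common definitions for formalizing results from
"Local continuous extension of proper holomorphic maps: low-regularity and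
infinite-type boundaries" (A. Banik).
-/

open Metric Set Filter MeasureTheory
open scoped Real ENNReal ComplexInnerProductSpace Topology

noncomputable section

namespace Paper

variable {E : Type*} [NormedAddCommGroup E] [InnerProductSpace ℂ E]

/-- Auxiliary: any coordinate is bounded by the Euclidean norm. -/
private lemma coord_le_norm (x : Cn 2) (i : Fin 2) : ‖x i‖ ≤ ‖x‖ := by
  rw [EuclideanSpace.norm_eq]
  apply Real.le_sqrt_of_sq_le
  have : ∑ j : Fin 2, ‖x j‖ ^ 2 = ‖x 0‖^2 + ‖x 1‖^2 := by
    simp [Fin.sum_univ_two]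
  rw [this]
  fin_cases i <;> simp <;> positivity

/-- Auxiliary: the Euclidean norm is bounded by the sum of coordinate moduli. -/
private lemma norm_le_sum (x : Cn 2) : ‖x‖ ≤ ‖x 0‖ + ‖x 1‖ := by
  rw [EuclideanSpace.norm_eq]
  have h : ∑ j : Fin 2, ‖x j‖ ^ 2 = ‖x 0‖^2 + ‖x 1‖^2 := by simp [Fin.sum_univ_two]
  rw [h]
  have h2 : ‖x 0‖^2 + ‖x 1‖^2 ≤ (‖x 0‖ + ‖x 1‖)^2 := by
    nlinarith [norm_nonneg (x 0), norm_nonneg (x 1)]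
  calc Real.sqrt (‖x 0‖^2 + ‖x 1‖^2) ≤ Real.sqrt ((‖x 0‖ + ‖x 1‖)^2) :=
        Real.sqrt_le_sqrt h2
    _ = _ := Real.sqrt_sq (by positivity)

/-- Auxiliary: every complex number has a unimodular phase factor rotating it to its modulus. -/
private lemma phase_exists (z : ℂ) : ∃ u : ℂ, ‖u‖ = 1 ∧ u * z = (‖z‖ : ℂ) := by
  by_cases h : z = 0
  · exact ⟨1, by simp [h]⟩
  · refine ⟨(starRingEnd ℂ) z / (‖z‖ : ℂ), ?_, ?_⟩
    · rw [norm_div]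
      simp [Complex.norm_conj, Complex.norm_real, Real.norm_eq_abs, abs_of_pos (norm_pos_iff.2 h),
        div_self (norm_ne_zero_iff.2 h)]
    · rw [div_mul_eq_mul_div, Complex.conj_mul']
      rw [div_eq_iff (by simpa using norm_ne_zero_iff.2 h)]
      norm_cast
      ring

/-- Auxiliary: Schwarz-type bound for analytic discs in `{|z| + |w| < 1}`:
for any unimodular-bounded `λ, μ`, the affine functional `1 - λz - μw` has positive
real part on the domain, whence (by a Möbius transformation and the Schwarz lemma)
`|λ W₀ + μ W₁| ≤ 2 (1 - Re (λ p₀ + μ p₁))` for `W = f′(0)`, `p = f(0)`. -/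
private lemma star_bound {p : Cn 2} {f : ℂ → Cn 2}
    (hd : DifferentiableOn ℂ f (ball 0 1))
    (hm : MapsTo f (ball 0 1) {q : Cn 2 | ‖q 0‖ + ‖q 1‖ < 1})
    (hf0 : f 0 = p) (lam mu : ℂ)
    (hl : ‖lam‖ ≤ 1) (hmu : ‖mu‖ ≤ 1) :
    ‖lam * deriv f 0 0 + mu * deriv f 0 1‖ ≤
      2 * (1 - (lam * p 0 + mu * p 1).re) := by
  set L : ℂ → ℂ := fun ζ => 1 - (lam * f ζ 0 + mu * f ζ 1) with hL
  have hball : (0:ℂ) ∈ ball (0:ℂ) 1 := by simp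
  have hre : ∀ ζ ∈ ball (0:ℂ) 1, 0 < (L ζ).re := by
    intro ζ hζ
    have hfζ := hm hζ
    simp only [mem_setOf_eq] at hfζ
    have h1 : (lam * f ζ 0).re ≤ ‖f ζ 0‖ := by
      calc (lam * f ζ 0).re ≤ ‖lam * f ζ 0‖ := Complex.re_le_norm _
        _ = ‖lam‖ * ‖f ζ 0‖ := norm_mul _ _
        _ ≤ 1 * ‖f ζ 0‖ := by
            exact mul_le_mul_of_nonneg_right hl (norm_nonneg _)
        _ = _ := one_mul _
    have h2 : (mu * f ζ 1).re ≤ ‖f ζ 1‖ := by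
      calc (mu * f ζ 1).re ≤ ‖mu * f ζ 1‖ := Complex.re_le_norm _
        _ = ‖mu‖ * ‖f ζ 1‖ := norm_mul _ _
        _ ≤ 1 * ‖f ζ 1‖ := by
            exact mul_le_mul_of_nonneg_right hmu (norm_nonneg _)
        _ = _ := one_mul _
    simp only [hL, Complex.sub_re, Complex.one_re, Complex.add_re]
    linarith
  set c0 : ℂ := L 0 with hc0def
  have hc0 : 0 < c0.re := hre 0 hball
  set ψ : ℂ → ℂ := fun ζ => (L ζ - c0) / (L ζ + (starRingEnd ℂ) c0) with hψ
  have hden : ∀ ζ ∈ ball (0:ℂ) 1, L ζ + (starRingEnd ℂ) c0 ≠ 0 := by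
    intro ζ hζ h0
    have : (L ζ + (starRingEnd ℂ) c0).re = (L ζ).re + c0.re := by
      simp [Complex.add_re, Complex.conj_re]
    rw [h0] at this
    simp at this
    have := hre ζ hζ
    linarith
  have hdL : DifferentiableOn ℂ L (ball 0 1) := by
    have h0 : DifferentiableOn ℂ (fun ζ => f ζ 0) (ball (0:ℂ) 1) := by
      have := (EuclideanSpace.proj (0 : Fin 2) :
        Cn 2 →L[ℂ] ℂ).differentiable.comp_differentiableOn hd
      exact this
    have h1 : DifferentiableOn ℂ (fun ζ => f ζ 1) (ball (0:ℂ) 1) := by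
      have := (EuclideanSpace.proj (1 : Fin 2) :
        Cn 2 →L[ℂ] ℂ).differentiable.comp_differentiableOn hd
      exact this
    exact (differentiableOn_const _).sub (((h0.const_mul lam)).add ((h1.const_mul mu)))
  have hdψ : DifferentiableOn ℂ ψ (ball 0 1) :=
    (hdL.sub_const c0).div (hdL.add_const _) hden
  have hmapψ : MapsTo ψ (ball 0 1) (ball (ψ 0) 1) := by
    have hψ0 : ψ 0 = 0 := by simp [hψ, hc0def]
    rw [hψ0]
    intro ζ hζ
    simp only [mem_ball, dist_zero_right]
    have hreζ := hre ζ hζ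
    have habslt : ‖L ζ - c0‖ < ‖L ζ + (starRingEnd ℂ) c0‖ := by
      have hsq : Complex.normSq (L ζ - c0) < Complex.normSq (L ζ + (starRingEnd ℂ) c0) := by
        simp only [Complex.normSq_apply, Complex.sub_re, Complex.sub_im, Complex.add_re,
          Complex.add_im, Complex.conj_re, Complex.conj_im]
        nlinarith [hreζ, hc0]
      have := Real.sqrt_lt_sqrt (Complex.normSq_nonneg _) hsq
      simpa [Complex.norm_def] using this
    rw [hψ, norm_div]
    rw [div_lt_one (lt_of_le_of_lt (norm_nonneg _) habslt)]
    exact habslt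
  have hschwarz : ‖deriv ψ 0‖ ≤ 1 := by
    have := Complex.norm_deriv_le_div_of_mapsTo_ball hdψ (hmapψ.mono_right ball_subset_closedBall) one_pos
    simpa using this
  have hfd : DifferentiableAt ℂ f 0 := hd.differentiableAt (isOpen_ball.mem_nhds hball)
  have hf' : HasDerivAt f (deriv f 0) 0 := hfd.hasDerivAt
  have hg' : HasDerivAt (fun ζ => f ζ 0) (deriv f 0 0) 0 :=
    ((EuclideanSpace.proj (0 : Fin 2) : Cn 2 →L[ℂ] ℂ).hasFDerivAt.comp_hasDerivAt 0 hf')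
  have hh' : HasDerivAt (fun ζ => f ζ 1) (deriv f 0 1) 0 :=
    ((EuclideanSpace.proj (1 : Fin 2) : Cn 2 →L[ℂ] ℂ).hasFDerivAt.comp_hasDerivAt 0 hf')
  set D : ℂ := lam * deriv f 0 0 + mu * deriv f 0 1 with hD
  have hL' : HasDerivAt L (-D) 0 := by
    have := ((hg'.const_mul lam).add (hh'.const_mul mu)).const_sub 1
    simpa [hL, hD] using this
  have hψ' : HasDerivAt ψ ((-D * (c0 + (starRingEnd ℂ) c0) - (L 0 - c0) * (-D)) /
      (L 0 + (starRingEnd ℂ) c0) ^ 2) 0 :=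
    ((hL'.sub_const c0).div (hL'.add_const ((starRingEnd ℂ) c0)) (hden 0 hball))
  have hderiv : deriv ψ 0 = -D / (c0 + (starRingEnd ℂ) c0) := by
    rw [hψ'.deriv, ← hc0def]
    have hne : c0 + (starRingEnd ℂ) c0 ≠ 0 := hden 0 hball
    field_simp
    ring
  rw [hderiv] at hschwarz
  have habsden : ‖c0 + (starRingEnd ℂ) c0‖ = 2 * c0.re := by
    rw [Complex.add_conj]
    simp [Complex.norm_real, abs_of_pos hc0]
  rw [norm_div, norm_neg, habsden, div_le_one (by linarith)] at hschwarz
  have : c0.re = 1 - (lam * p 0 + mu * p 1).re := by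
    simp [hc0def, hL, hf0, Complex.sub_re, Complex.one_re]
  rw [this] at hschwarz
  linarith [hschwarz]


set_option maxHeartbeats 1600000 in
/-- Step 2 of Example 2.2 of the paper. A lower bound for the
Kobayashi metric of `Ω = {|z| + |w| < 1}` near `(1,0)`:
`k_Ω((z,w); v) ≥ ‖v‖ / (c̃ δ_Ω(z,w)^{1/2})`. -/
theorem example_kobayashi_metric_bound :
    ∃ δ : ℝ, 0 < δ ∧ ∃ c : ℝ, 0 < c ∧
      ∀ p : Cn 2,
        p ∈ ball (EuclideanSpace.single (0 : Fin 2) (1 : ℂ)) δ →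
        ‖p 0‖ + ‖p 1‖ < 1 →
        ∀ v : Cn 2,
          ‖v‖ / (c * Real.sqrt
              (delta {q : Cn 2 | ‖q 0‖ + ‖q 1‖ < 1} p)) ≤
            kobMetric {q : Cn 2 | ‖q 0‖ + ‖q 1‖ < 1} p v := by
  refine ⟨1, one_pos, 100, by norm_num, ?_⟩
  intro p _ hpS v
  set S : Set (Cn 2) := {q : Cn 2 | ‖q 0‖ + ‖q 1‖ < 1} with hSdef
  set t : ℝ := 1 - ‖p 0‖ - ‖p 1‖ with htdef
  have htpos : 0 < t := by simp only [htdef]; linarith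
  have ht1 : t ≤ 1 := by
    have h0 := norm_nonneg (p 0)
    have h1 := norm_nonneg (p 1)
    simp only [htdef]; linarith
  have hsum : ‖p 0‖ + ‖p 1‖ = 1 - t := by
    simp only [htdef]; ring
  have hSopen : IsOpen S := by
    have hcont : Continuous fun q : Cn 2 => ‖q 0‖ + ‖q 1‖ :=
      ((continuous_norm.comp
          (EuclideanSpace.proj (0 : Fin 2) : Cn 2 →L[ℂ] ℂ).continuous).add
        (continuous_norm.comp
          (EuclideanSpace.proj (1 : Fin 2) : Cn 2 →L[ℂ] ℂ).continuous))
    exact isOpen_lt hcont continuous_const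
  have hScne : Sᶜ.Nonempty := by
    refine ⟨EuclideanSpace.single (0 : Fin 2) (2 : ℂ), ?_⟩
    simp [hSdef, EuclideanSpace.single_apply]
  have hpmem : p ∈ S := hpS
  have hdpos : 0 < delta S p := by
    simp only [delta]
    exact (hSopen.isClosed_compl.notMem_iff_infDist_pos hScne).1 (by simpa using hpmem)
  have htd : t ≤ 2 * delta S p := by
    by_contra hcon
    push_neg at hcon
    simp only [delta] at hcon
    have hlt : Metric.infDist p Sᶜ < t / 2 := by linarith
    obtain ⟨q, hq, hdq⟩ := (Metric.infDist_lt_iff hScne).1 hlt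
    have hq1 : (1:ℝ) ≤ ‖q 0‖ + ‖q 1‖ := by
      simpa [hSdef] using hq
    have hc0 : ‖q 0‖ - ‖p 0‖ ≤ ‖(p - q) 0‖ := by
      have h := norm_sub_norm_le (q 0) (p 0)
      have he : (p - q) 0 = p 0 - q 0 := by simp
      rw [he, show ‖p 0 - q 0‖ = ‖q 0 - p 0‖ from by
        rw [← neg_sub (q 0) (p 0), norm_neg]]
      linarith [h]
    have hc1 : ‖q 1‖ - ‖p 1‖ ≤ ‖(p - q) 1‖ := by
      have h := norm_sub_norm_le (q 1) (p 1)
      have he : (p - q) 1 = p 1 - q 1 := by simp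
      rw [he, show ‖p 1 - q 1‖ = ‖q 1 - p 1‖ from by
        rw [← neg_sub (q 1) (p 1), norm_neg]]
      linarith [h]
    have hn0 := coord_le_norm (p - q) 0
    have hn1 := coord_le_norm (p - q) 1
    rw [dist_eq_norm] at hdq
    simp only [htdef] at hlt ⊢
    linarith
  simp only [kobMetric]
  apply le_csInf
  · -- nonemptiness of the defining set, via a small linear disc
    set ε : ℝ := delta S p / (2 * (‖v‖ + 1)) with hεdef
    have hεpos : 0 < ε := by
      apply div_pos hdpos
      positivity
    set w : Cn 2 := (ε : ℂ) • v with hwdef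
    refine ⟨‖(ε : ℂ)⁻¹‖, (ε : ℂ)⁻¹, rfl, fun ζ => p + ζ • w, ?_, ?_, by simp, ?_⟩
    · exact ((differentiable_id.smul_const w).const_add p).differentiableOn
    · intro ζ hζ
      simp only [mem_ball, dist_zero_right] at hζ
      have hnorm : ‖ζ • w‖ < delta S p := by
        rw [norm_smul, hwdef, norm_smul]
        simp only [Complex.norm_real, Real.norm_eq_abs, abs_of_pos hεpos]
        have h1 : ε * ‖v‖ ≤ delta S p / 2 := by
          rw [hεdef, div_mul_eq_mul_div, div_le_div_iff₀ (by positivity) (by norm_num)]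
          nlinarith [norm_nonneg v, hdpos]
        have h2 : ‖ζ‖ * (ε * ‖v‖) ≤ ε * ‖v‖ :=
          mul_le_of_le_one_left (by positivity) hζ.le
        linarith
      by_contra hmem
      have hle : delta S p ≤ dist p (p + ζ • w) := by
        simp only [delta]
        exact Metric.infDist_le_dist_of_mem (by simpa using hmem)
      rw [dist_eq_norm, show p - (p + ζ • w) = -(ζ • w) by abel, norm_neg] at hle
      linarith
    · have hderiv : deriv (fun ζ : ℂ => p + ζ • w) 0 = w := by
        have h : HasDerivAt (fun ζ : ℂ => p + ζ • w) ((1:ℂ) • w) 0 :=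
          ((hasDerivAt_id (0:ℂ)).smul_const w).const_add p
        rw [h.deriv, one_smul]
      rw [hderiv, hwdef, smul_smul, inv_mul_cancel₀ (by exact_mod_cast hεpos.ne'), one_smul]
  · -- every competitor is bounded below
    rintro r ⟨α, rfl, f, hd, hm, hf0, hv⟩
    obtain ⟨u0, hu0abs, hu0⟩ := phase_exists (p 0)
    obtain ⟨u1, hu1abs, hu1⟩ := phase_exists (p 1)
    set σ : ℝ := Real.sqrt t with hσdef
    have hσpos : 0 < σ := Real.sqrt_pos.2 htpos
    have hσsq : σ ^ 2 = t := Real.sq_sqrt htpos.le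
    have hσ1 : σ ≤ 1 := by
      rw [hσdef, show (1:ℝ) = Real.sqrt 1 from (Real.sqrt_one).symm]
      exact Real.sqrt_le_sqrt ht1
    have htσ : t ≤ σ := by nlinarith
    set A : ℂ := u0 * deriv f 0 0 with hA
    set B : ℂ := u1 * deriv f 0 1 with hB
    have ineq1 : ‖A + B‖ ≤ 2 * t := by
      have h := star_bound hd hm hf0 u0 u1 hu0abs.le hu1abs.le
      have hre : (u0 * p 0 + u1 * p 1).re = 1 - t := by
        rw [hu0, hu1, ← Complex.ofReal_add, Complex.ofReal_re, hsum]
      rw [hre] at h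
      rw [hA, hB]
      linarith [h]
    have ineq2 : ‖Complex.exp ((σ : ℂ) * Complex.I) * A +
        Complex.exp (((-σ : ℝ) : ℂ) * Complex.I) * B‖ ≤
        2 * (1 - Real.cos σ * (1 - t)) := by
      have h := star_bound hd hm hf0 (Complex.exp ((σ : ℂ) * Complex.I) * u0)
        (Complex.exp (((-σ : ℝ) : ℂ) * Complex.I) * u1)
        (by rw [norm_mul, Complex.norm_exp_ofReal_mul_I, hu0abs, one_mul])
        (by rw [norm_mul, Complex.norm_exp_ofReal_mul_I, hu1abs, one_mul])
      have hre : (Complex.exp ((σ : ℂ) * Complex.I) * u0 * p 0 +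
          Complex.exp (((-σ : ℝ) : ℂ) * Complex.I) * u1 * p 1).re =
          Real.cos σ * (‖p 0‖ + ‖p 1‖) := by
        rw [mul_assoc, mul_assoc, hu0, hu1]
        simp only [Complex.add_re, Complex.mul_re, Complex.ofReal_re, Complex.ofReal_im,
          Complex.exp_ofReal_mul_I_re, Complex.exp_ofReal_mul_I_im]
        rw [Real.cos_neg]
        ring
      rw [hre, hsum] at h
      have harg : Complex.exp ((σ : ℂ) * Complex.I) * A +
          Complex.exp (((-σ : ℝ) : ℂ) * Complex.I) * B =
          Complex.exp ((σ : ℂ) * Complex.I) * u0 * deriv f 0 0 +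
          Complex.exp (((-σ : ℝ) : ℂ) * Complex.I) * u1 * deriv f 0 1 := by
        rw [hA, hB]; ring
      rw [harg]
      linarith [h]
    have hid : ((Real.sin σ : ℝ) : ℂ) * Complex.I * (A - B) =
        (Complex.exp ((σ : ℂ) * Complex.I) * A +
          Complex.exp (((-σ : ℝ) : ℂ) * Complex.I) * B) -
          ((Real.cos σ : ℝ) : ℂ) * (A + B) := by
      rw [Complex.exp_mul_I, Complex.exp_mul_I]
      push_cast
      rw [Complex.cos_neg, Complex.sin_neg]
      rw [← Complex.ofReal_cos, ← Complex.ofReal_sin]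
      push_cast
      ring
    have hsin_nonneg : 0 ≤ Real.sin σ :=
      Real.sin_nonneg_of_nonneg_of_le_pi hσpos.le (by linarith [Real.pi_gt_three])
    have hcos_nonneg : 0 ≤ Real.cos σ := by
      apply Real.cos_nonneg_of_mem_Icc
      constructor
      · linarith [Real.pi_gt_three, hσpos.le]
      · linarith [Real.pi_gt_three]
    have hcos_le : Real.cos σ ≤ 1 := Real.cos_le_one σ
    have hcos_ge : 1 - t / 2 ≤ Real.cos σ := by
      have h := Real.one_sub_sq_div_two_le_cos (x := σ)
      rw [hσsq] at h
      linarith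
    have hkey : Real.sin σ * ‖A - B‖ ≤ 5 * t := by
      have h1 : Real.sin σ * ‖A - B‖ =
          ‖((Real.sin σ : ℝ) : ℂ) * Complex.I * (A - B)‖ := by
        rw [norm_mul, norm_mul, Complex.norm_of_nonneg hsin_nonneg, Complex.norm_I,
          mul_one]
      rw [h1, hid]
      have htri := norm_sub_le
        (Complex.exp ((σ : ℂ) * Complex.I) * A +
          Complex.exp (((-σ : ℝ) : ℂ) * Complex.I) * B)
        (((Real.cos σ : ℝ) : ℂ) * (A + B))
      have habs : ‖((Real.cos σ : ℝ) : ℂ) * (A + B)‖ =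
          Real.cos σ * ‖A + B‖ := by
        rw [norm_mul, Complex.norm_of_nonneg hcos_nonneg]
      have h2 : Real.cos σ * ‖A + B‖ ≤ 2 * t := by
        calc Real.cos σ * ‖A + B‖ ≤ 1 * ‖A + B‖ :=
              mul_le_mul_of_nonneg_right hcos_le (norm_nonneg _)
          _ = ‖A + B‖ := one_mul _
          _ ≤ 2 * t := ineq1
      have h3 : 2 * (1 - Real.cos σ * (1 - t)) ≤ 3 * t := by nlinarith
      have h4 : ‖((Real.cos σ : ℝ) : ℂ) * (A + B)‖ ≤ 2 * t := by
        rw [habs]; exact h2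
      calc ‖(Complex.exp ((σ : ℂ) * Complex.I) * A +
            Complex.exp (((-σ : ℝ) : ℂ) * Complex.I) * B) -
            ((Real.cos σ : ℝ) : ℂ) * (A + B)‖ ≤ _ := htri
        _ ≤ 2 * (1 - Real.cos σ * (1 - t)) + 2 * t := add_le_add ineq2 h4
        _ ≤ 5 * t := by linarith
    have hsin_ge : 3 / 4 * σ ≤ Real.sin σ := by
      have h := Real.sin_gt_sub_cube hσpos
      nlinarith
    have hAB : ‖A - B‖ ≤ 7 * σ := by
      nlinarith [norm_nonneg (A - B), hkey, hsin_ge, hσpos, hσsq]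
    have hAle : ‖A‖ ≤ 5 * σ := by
      have hhalf : ‖A‖ ≤ (‖A + B‖ + ‖A - B‖) / 2 := by
        have h2 : ‖A‖ = ‖(A + B) + (A - B)‖ / 2 := by
          have h2a : ‖2 * A‖ = 2 * ‖A‖ := by
            rw [norm_mul, Complex.norm_two]
          rw [show (A + B) + (A - B) = 2 * A by ring, h2a]
          ring
        rw [h2]
        linarith [norm_add_le (A + B) (A - B)]
      linarith
    have hBle : ‖B‖ ≤ 5 * σ := by
      have hhalf : ‖B‖ ≤ (‖A + B‖ + ‖A - B‖) / 2 := by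
        have h2 : ‖B‖ = ‖(A + B) - (A - B)‖ / 2 := by
          have h2a : ‖2 * B‖ = 2 * ‖B‖ := by
            rw [norm_mul, Complex.norm_two]
          rw [show (A + B) - (A - B) = 2 * B by ring, h2a]
          ring
        rw [h2]
        linarith [norm_sub_le (A + B) (A - B)]
      linarith
    have hW0le : ‖deriv f 0 0‖ ≤ 5 * σ := by
      have : ‖A‖ = ‖deriv f 0 0‖ := by
        rw [hA, norm_mul, hu0abs, one_mul]
      linarith [hAle, this.symm.le, this.le]
    have hW1le : ‖deriv f 0 1‖ ≤ 5 * σ := by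
      have : ‖B‖ = ‖deriv f 0 1‖ := by
        rw [hB, norm_mul, hu1abs, one_mul]
      linarith [hBle, this.symm.le, this.le]
    have hWnorm : ‖deriv f 0‖ ≤ 10 * σ := by
      have := norm_le_sum (deriv f 0)
      linarith
    have hvnorm : ‖v‖ = ‖α‖ * ‖deriv f 0‖ := by
      rw [← hv, norm_smul]
    have hsqrt2 : Real.sqrt 2 ≤ 1.5 := by
      have h := Real.sqrt_le_sqrt (show (2:ℝ) ≤ 1.5 ^ 2 by norm_num)
      rwa [Real.sqrt_sq (by norm_num : (0:ℝ) ≤ 1.5)] at h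
    have hsdpos : 0 < Real.sqrt (delta S p) := Real.sqrt_pos.2 hdpos
    have hσδ : σ ≤ 1.5 * Real.sqrt (delta S p) := by
      have h1 : σ ≤ Real.sqrt (2 * delta S p) := Real.sqrt_le_sqrt htd
      rw [Real.sqrt_mul (by norm_num : (0:ℝ) ≤ 2)] at h1
      nlinarith [Real.sqrt_nonneg (delta S p)]
    rw [div_le_iff₀ (by positivity)]
    have hαnn : 0 ≤ ‖α‖ := norm_nonneg α
    calc ‖v‖ = ‖α‖ * ‖deriv f 0‖ := hvnorm
      _ ≤ ‖α‖ * (10 * σ) := mul_le_mul_of_nonneg_left hWnorm hαnn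
      _ ≤ ‖α‖ * (10 * (1.5 * Real.sqrt (delta S p))) := by
          apply mul_le_mul_of_nonneg_left _ hαnn
          linarith [hσδ]
      _ ≤ ‖α‖ * (100 * Real.sqrt (delta S p)) := by
          apply mul_le_mul_of_nonneg_left _ hαnn
          linarith [hsdpos.le]

end Paper
end
end
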